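/- arXiv:2505.19664 — 5 statements merged into one kernel-verified Lean document; each statement's English description precedes it below -/
import Mathlib

section
/- Let G, G' : [0,1]×[0,1] → [0,∞) be measurable and bounded with ∫₀¹ G(u,v) dv ≥ c and ∫₀¹ G'(u,v) dv ≥ c for every u ∈ [0,1], where c > 0. Then for all u₁, u₂ ∈ [0,1], the normalized kernels satisfy ∫₀¹ |G̃(u₁,v) − G̃'(u₂,v)| dv ≤ (2/c) ∫₀¹ |G(u₁,v) − G'(u₂,v)| dv. -/
open MeasureTheory ENNReal

noncomputable section

/-- The normalized kernel `G̃(u,v) = G(u,v) / ∫₀¹ G(u,w) dw`. -/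
def gnorm (G : ℝ → ℝ → ℝ) (u v : ℝ) : ℝ :=
  G u v / ∫ w in Set.Icc (0:ℝ) 1, G u w

/-- **L¹ stability of graphon normalization**: if both kernels have degrees bounded below
by `c > 0`, then `∫₀¹ |G̃(u₁,v) − G̃'(u₂,v)| dv ≤ (2/c) ∫₀¹ |G(u₁,v) − G'(u₂,v)| dv`. -/
theorem normalized_kernel_L1_stability
    (G G' : ℝ → ℝ → ℝ) (M c : ℝ) (hc : 0 < c)
    (hGmeas : Measurable (Function.uncurry G))
    (hG'meas : Measurable (Function.uncurry G'))
    (hGnonneg : ∀ u v, 0 ≤ G u v)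
    (hG'nonneg : ∀ u v, 0 ≤ G' u v)
    (hGbdd : ∀ u v, G u v ≤ M)
    (hG'bdd : ∀ u v, G' u v ≤ M)
    (hGdeg : ∀ u ∈ Set.Icc (0:ℝ) 1, c ≤ ∫ v in Set.Icc (0:ℝ) 1, G u v)
    (hG'deg : ∀ u ∈ Set.Icc (0:ℝ) 1, c ≤ ∫ v in Set.Icc (0:ℝ) 1, G' u v)
    (u₁ u₂ : ℝ) (hu₁ : u₁ ∈ Set.Icc (0:ℝ) 1) (hu₂ : u₂ ∈ Set.Icc (0:ℝ) 1) :
    ∫ v in Set.Icc (0:ℝ) 1, |gnorm G u₁ v - gnorm G' u₂ v| ≤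
      (2 / c) * ∫ v in Set.Icc (0:ℝ) 1, |G u₁ v - G' u₂ v| := by
  set f : ℝ → ℝ := fun v => G u₁ v with hf
  set g : ℝ → ℝ := fun v => G' u₂ v with hg
  set a : ℝ := ∫ v in Set.Icc (0:ℝ) 1, f v with hadef
  set b : ℝ := ∫ v in Set.Icc (0:ℝ) 1, g v with hbdef
  have ha : c ≤ a := hGdeg u₁ hu₁
  have hb : c ≤ b := hG'deg u₂ hu₂
  have ha0 : 0 < a := lt_of_lt_of_le hc ha
  have hb0 : 0 < b := lt_of_lt_of_le hc hb
  have hfmeas : Measurable f := hGmeas.comp (measurable_const.prodMk measurable_id)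
  have hgmeas : Measurable g := hG'meas.comp (measurable_const.prodMk measurable_id)
  have hMconst : IntegrableOn (fun _ : ℝ => M) (Set.Icc (0:ℝ) 1) volume :=
    integrableOn_const measure_Icc_lt_top.ne
  have intf : IntegrableOn f (Set.Icc (0:ℝ) 1) volume := by
    refine hMconst.mono' hfmeas.aestronglyMeasurable ?_
    filter_upwards with v
    rw [Real.norm_eq_abs, abs_of_nonneg (hGnonneg u₁ v)]
    exact hGbdd u₁ v
  have intg : IntegrableOn g (Set.Icc (0:ℝ) 1) volume := by
    refine hMconst.mono' hgmeas.aestronglyMeasurable ?_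
    filter_upwards with v
    rw [Real.norm_eq_abs, abs_of_nonneg (hG'nonneg u₂ v)]
    exact hG'bdd u₂ v
  have intfg : IntegrableOn (fun v => |f v - g v|) (Set.Icc (0:ℝ) 1) volume :=
    (intf.sub intg).abs
  have key : ∀ v, |f v / a - g v / b| ≤ |f v - g v| / a + g v * (|a - b| / (a * b)) := by
    intro v
    have h1 : f v / a - g v / b = (f v - g v) / a + g v * (b - a) / (a * b) := by
      field_simp
      ring
    rw [h1]
    calc |(f v - g v) / a + g v * (b - a) / (a * b)|
        ≤ |(f v - g v) / a| + |g v * (b - a) / (a * b)| := abs_add_le _ _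
      _ = |f v - g v| / a + g v * (|a - b| / (a * b)) := by
          rw [abs_div, abs_of_pos ha0, abs_div, abs_of_pos (mul_pos ha0 hb0),
            abs_mul, abs_of_nonneg (hG'nonneg u₂ v), mul_div_assoc, abs_sub_comm b a]
  have intLHS : IntegrableOn (fun v => |gnorm G u₁ v - gnorm G' u₂ v|)
      (Set.Icc (0:ℝ) 1) volume := by
    simp only [gnorm]
    exact ((intf.div_const a).sub (intg.div_const b)).abs
  have intRHS : IntegrableOn (fun v => |f v - g v| / a + g v * (|a - b| / (a * b)))
      (Set.Icc (0:ℝ) 1) volume :=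
    (intfg.div_const a).add (intg.mul_const _)
  have step1 : ∫ v in Set.Icc (0:ℝ) 1, |gnorm G u₁ v - gnorm G' u₂ v| ≤
      ∫ v in Set.Icc (0:ℝ) 1, (|f v - g v| / a + g v * (|a - b| / (a * b))) := by
    refine integral_mono intLHS intRHS ?_
    intro v
    simpa [gnorm] using key v
  have step2 : ∫ v in Set.Icc (0:ℝ) 1, (|f v - g v| / a + g v * (|a - b| / (a * b))) =
      (∫ v in Set.Icc (0:ℝ) 1, |f v - g v|) / a + b * (|a - b| / (a * b)) := by
    rw [integral_add (intfg.div_const a) (intg.mul_const _), integral_div,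
      integral_mul_const, ← hbdef]
  have habs : |a - b| ≤ ∫ v in Set.Icc (0:ℝ) 1, |f v - g v| := by
    have := norm_integral_le_integral_norm (μ := volume.restrict (Set.Icc (0:ℝ) 1))
      (f := fun v => f v - g v)
    rw [integral_sub intf intg] at this
    simpa [Real.norm_eq_abs] using this
  set I : ℝ := ∫ v in Set.Icc (0:ℝ) 1, |f v - g v| with hI
  have hI0 : 0 ≤ I := integral_nonneg fun v => abs_nonneg _
  have hbab : b * (|a - b| / (a * b)) = |a - b| / a := by
    field_simp
  calc ∫ v in Set.Icc (0:ℝ) 1, |gnorm G u₁ v - gnorm G' u₂ v|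
      ≤ I / a + b * (|a - b| / (a * b)) := by rw [← step2]; exact step1
    _ = I / a + |a - b| / a := by rw [hbab]
    _ ≤ I / a + I / a := by
        gcongr
    _ = 2 * I / a := by ring
    _ ≤ 2 * I / c := by
        apply div_le_div_of_nonneg_left (by positivity) hc ha
    _ = (2 / c) * I := by ring

end
end

section
/- Let w₁, w₂ : [0,1] → [0,∞) be Lebesgue-measurable with ∫₀¹ w₁(v) dv = ∫₀¹ w₂(v) dv = 1, and let (μ^v)_{v∈[0,1]} be a setwise measurable family of Borel probability measures on ℝ^d with ∫ |x|² dμ^v(x) ≤ K for every v ∈ [0,1]. Let P and Q be the mixture probability measures determined by P(B) = ∫₀¹ w₁(v) μ^v(B) dv and Q(B) = ∫₀¹ w₂(v) μ^v(B) dv for Borel sets B. Then W₂²(P, Q) ≤ 2K ∫₀¹ |w₁(v) − w₂(v)| dv. -/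
open MeasureTheory ENNReal
noncomputable section
section MixAux
variable {E : Type*} [MeasurableSpace E]
def mix (ρ : Measure ℝ) (μ : ℝ → Measure E)
    (hμ : ∀ B : Set E, MeasurableSet B → AEMeasurable (fun v => μ v B) ρ)
    (c : ℝ → ℝ≥0∞) (hc : AEMeasurable c ρ) : Measure E :=
  Measure.ofMeasurable (fun s _ => ∫⁻ v, c v * μ v s ∂ρ)
    (by simp)
    (by
      intro f hf hdisj
      have h1 : ∀ v, μ v (⋃ i, f i) = ∑' i, μ v (f i) := fun v =>
        measure_iUnion hdisj hf
      simp only [h1, ENNReal.tsum_mul_left.symm]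
      exact lintegral_tsum fun i => hc.mul (hμ _ (hf i)))
lemma mix_apply (ρ : Measure ℝ) (μ : ℝ → Measure E)
    (hμ : ∀ B : Set E, MeasurableSet B → AEMeasurable (fun v => μ v B) ρ)
    (c : ℝ → ℝ≥0∞) (hc : AEMeasurable c ρ) {s : Set E} (hs : MeasurableSet s) :
    mix ρ μ hμ c hc s = ∫⁻ v, c v * μ v s ∂ρ :=
  Measure.ofMeasurable_apply s hs
lemma lintegral_mixture (ρ : Measure ℝ) (μ : ℝ → Measure E)
    (hμ : ∀ B : Set E, MeasurableSet B → AEMeasurable (fun v => μ v B) ρ)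
    (c : ℝ → ℝ≥0∞) (hc : AEMeasurable c ρ) (σ : Measure E)
    (hσ : ∀ B : Set E, MeasurableSet B → σ B = ∫⁻ v, c v * μ v B ∂ρ)
    {f : E → ℝ≥0∞} (hf : Measurable f) :
    ∫⁻ x, f x ∂σ = ∫⁻ v, c v * ∫⁻ x, f x ∂(μ v) ∂ρ := by
  have hsimple : ∀ g : SimpleFunc E ℝ≥0∞,
      g.lintegral σ = ∫⁻ v, c v * g.lintegral (μ v) ∂ρ := by
    intro g
    simp only [SimpleFunc.lintegral]
    have h1 : ∀ y ∈ g.range, y * σ (g ⁻¹' {y}) = ∫⁻ v, y * (c v * μ v (g ⁻¹' {y})) ∂ρ := by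
      intro y _
      rw [hσ _ (g.measurableSet_fiber y),
        lintegral_const_mul'' y (hc.fun_mul (hμ _ (g.measurableSet_fiber y)))]
    rw [Finset.sum_congr rfl h1,
      ← lintegral_finset_sum' _ (fun y _ => (hc.fun_mul (hμ _ (g.measurableSet_fiber y))).const_mul y)]
    refine lintegral_congr fun v => ?_
    rw [Finset.mul_sum]
    exact Finset.sum_congr rfl fun y _ => by ring
  have haem : ∀ n : ℕ, AEMeasurable (fun v => c v * (SimpleFunc.eapprox f n).lintegral (μ v)) ρ := by
    intro n
    refine hc.mul ?_
    simp only [SimpleFunc.lintegral]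
    exact Finset.aemeasurable_fun_sum _ fun y _ =>
      (hμ _ ((SimpleFunc.eapprox f n).measurableSet_fiber y)).const_mul y
  rw [lintegral_eq_iSup_eapprox_lintegral hf]
  simp only [hsimple]
  rw [← lintegral_iSup' haem (Filter.Eventually.of_forall fun v => ?_)]
  · refine lintegral_congr fun v => ?_
    rw [← ENNReal.mul_iSup, ← lintegral_eq_iSup_eapprox_lintegral hf]
  · intro n k hnk
    exact mul_le_mul_right
      (SimpleFunc.lintegral_mono (SimpleFunc.monotone_eapprox f hnk) le_rfl) _
end MixAux
lemma sq_norm_sub_le {E : Type*} [NormedAddCommGroup E] (x y : E) :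
    (‖x - y‖₊ : ℝ≥0∞) ^ 2 ≤ 2 * (‖x‖₊ : ℝ≥0∞) ^ 2 + 2 * (‖y‖₊ : ℝ≥0∞) ^ 2 := by
  have h : ‖x - y‖₊ ^ 2 ≤ 2 * ‖x‖₊ ^ 2 + 2 * ‖y‖₊ ^ 2 := by
    rw [← NNReal.coe_le_coe]
    push_cast
    have h1 : ‖x - y‖ ≤ ‖x‖ + ‖y‖ := norm_sub_le x y
    have h2 : (0:ℝ) ≤ ‖x - y‖ := norm_nonneg _
    nlinarith [sq_nonneg (‖x‖ - ‖y‖), mul_self_le_mul_self h2 h1]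
  have h2' := ENNReal.coe_le_coe.mpr h
  push_cast at h2'
  convert h2' using 2
def W2sq {E : Type*} [NormedAddCommGroup E] [MeasurableSpace E]
    (μ ν : Measure E) : ℝ≥0∞ :=
  ⨅ (π : Measure (E × E)) (_ : IsProbabilityMeasure π)
    (_ : π.map Prod.fst = μ) (_ : π.map Prod.snd = ν),
    ∫⁻ p, (‖p.1 - p.2‖₊ : ℝ≥0∞) ^ 2 ∂π

/-- **Wasserstein stability of mixtures with respect to the weights**:
`W₂²(P, Q) ≤ 2K ∫₀¹ |w₁(v) − w₂(v)| dv` when `P`, `Q` are mixtures of a common family of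
measures with second moments bounded by `K`. -/
theorem W2sq_mixture_weight_stability
    (d : ℕ) (w₁ w₂ : ℝ → ℝ) (K : ℝ)
    (hw₁_meas : AEMeasurable w₁ (volume.restrict (Set.Icc (0:ℝ) 1)))
    (hw₂_meas : AEMeasurable w₂ (volume.restrict (Set.Icc (0:ℝ) 1)))
    (hw₁_nonneg : ∀ v ∈ Set.Icc (0:ℝ) 1, 0 ≤ w₁ v)
    (hw₂_nonneg : ∀ v ∈ Set.Icc (0:ℝ) 1, 0 ≤ w₂ v)
    (hw₁_int : ∫ v in Set.Icc (0:ℝ) 1, w₁ v = 1)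
    (hw₂_int : ∫ v in Set.Icc (0:ℝ) 1, w₂ v = 1)
    (μ : ℝ → Measure (EuclideanSpace ℝ (Fin d)))
    (hμprob : ∀ v ∈ Set.Icc (0:ℝ) 1, IsProbabilityMeasure (μ v))
    (hμsetwise : ∀ B : Set (EuclideanSpace ℝ (Fin d)), MeasurableSet B →
      AEMeasurable (fun v => μ v B) (volume.restrict (Set.Icc (0:ℝ) 1)))
    (hμmom : ∀ v ∈ Set.Icc (0:ℝ) 1,
      ∫⁻ x, (‖x‖₊ : ℝ≥0∞) ^ 2 ∂(μ v) ≤ ENNReal.ofReal K)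
    (P Q : Measure (EuclideanSpace ℝ (Fin d)))
    (hP_prob : IsProbabilityMeasure P)
    (hQ_prob : IsProbabilityMeasure Q)
    (hP : ∀ B : Set (EuclideanSpace ℝ (Fin d)), MeasurableSet B →
      P B = ∫⁻ v in Set.Icc (0:ℝ) 1, ENNReal.ofReal (w₁ v) * μ v B)
    (hQ : ∀ B : Set (EuclideanSpace ℝ (Fin d)), MeasurableSet B →
      Q B = ∫⁻ v in Set.Icc (0:ℝ) 1, ENNReal.ofReal (w₂ v) * μ v B) :
    W2sq P Q ≤
      ENNReal.ofReal (2 * K) *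
        ∫⁻ v in Set.Icc (0:ℝ) 1, ENNReal.ofReal |w₁ v - w₂ v| := by
  classical
  set E := EuclideanSpace ℝ (Fin d) with hE_def
  set ρ : Measure ℝ := volume.restrict (Set.Icc (0:ℝ) 1) with hρ
  have hcost_meas : Measurable (fun p : E × E => (‖p.1 - p.2‖₊ : ℝ≥0∞) ^ 2) :=
    (((measurable_fst.sub measurable_snd).nnnorm).coe_nnreal_ennreal).pow_const 2
  have hnorm_meas : Measurable (fun x : E => (‖x‖₊ : ℝ≥0∞) ^ 2) :=
    (measurable_nnnorm.coe_nnreal_ennreal).pow_const 2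
  have hdiag_meas : Measurable (fun x : E => (x, x)) := measurable_id.prodMk measurable_id
  have hW2le : ∀ π : Measure (E × E), IsProbabilityMeasure π → π.map Prod.fst = P →
      π.map Prod.snd = Q → W2sq P Q ≤ ∫⁻ p, (‖p.1 - p.2‖₊ : ℝ≥0∞) ^ 2 ∂π := by
    intro π h1 h2 h3
    exact iInf_le_of_le π (iInf_le_of_le h1 (iInf_le_of_le h2 (iInf_le_of_le h3 le_rfl)))
  -- weights
  set m : ℝ → ℝ := fun v => min (w₁ v) (w₂ v) with hm_def
  have hm_meas : AEMeasurable m ρ := hw₁_meas.min hw₂_meas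
  have hw₁_intg : Integrable w₁ ρ := by
    by_contra h
    rw [integral_undef h] at hw₁_int
    norm_num at hw₁_int
  have hw₂_intg : Integrable w₂ ρ := by
    by_contra h
    rw [integral_undef h] at hw₂_int
    norm_num at hw₂_int
  have hm_intg : Integrable m ρ := hw₁_intg.inf hw₂_intg
  have hae_mem : ∀ᵐ v ∂ρ, v ∈ Set.Icc (0:ℝ) 1 := ae_restrict_mem measurableSet_Icc
  set c₀ : ℝ → ℝ≥0∞ := fun v => ENNReal.ofReal (m v) with hc₀_def
  set c₁ : ℝ → ℝ≥0∞ := fun v => ENNReal.ofReal (w₁ v - m v) with hc₁_def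
  set c₂ : ℝ → ℝ≥0∞ := fun v => ENNReal.ofReal (w₂ v - m v) with hc₂_def
  have hc₀ : AEMeasurable c₀ ρ := ENNReal.measurable_ofReal.comp_aemeasurable hm_meas
  have hc₁ : AEMeasurable c₁ ρ :=
    ENNReal.measurable_ofReal.comp_aemeasurable (hw₁_meas.sub hm_meas)
  have hc₂ : AEMeasurable c₂ ρ :=
    ENNReal.measurable_ofReal.comp_aemeasurable (hw₂_meas.sub hm_meas)
  set im : ℝ := ∫ v, m v ∂ρ with him_def
  have him0 : 0 ≤ im := by
    refine integral_nonneg_of_ae ?_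
    filter_upwards [hae_mem] with v hv
    exact le_min (hw₁_nonneg v hv) (hw₂_nonneg v hv)
  have him1 : im ≤ 1 := by
    rw [← hw₁_int]
    exact integral_mono hm_intg hw₁_intg fun v => min_le_left _ _
  set ε : ℝ≥0∞ := ENNReal.ofReal (1 - im) with hε_def
  have hεtop : ε ≠ ⊤ := ENNReal.ofReal_ne_top
  have hδ₁ : ∫⁻ v, c₁ v ∂ρ = ε := by
    have h := ofReal_integral_eq_lintegral_ofReal (μ := ρ) (f := fun v => w₁ v - m v)
      (hw₁_intg.sub hm_intg)
      (Filter.Eventually.of_forall fun v => sub_nonneg.mpr (min_le_left _ _))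
    rw [hc₁_def, ← h, integral_sub hw₁_intg hm_intg, hw₁_int]
  have hδ₂ : ∫⁻ v, c₂ v ∂ρ = ε := by
    have h := ofReal_integral_eq_lintegral_ofReal (μ := ρ) (f := fun v => w₂ v - m v)
      (hw₂_intg.sub hm_intg)
      (Filter.Eventually.of_forall fun v => sub_nonneg.mpr (min_le_right _ _))
    rw [hc₂_def, ← h, integral_sub hw₂_intg hm_intg, hw₂_int]
  have hδ₀ : ∫⁻ v, c₀ v ∂ρ = ENNReal.ofReal im := by
    rw [hc₀_def, him_def, ofReal_integral_eq_lintegral_ofReal hm_intg ?_]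
    filter_upwards [hae_mem] with v hv
    exact le_min (hw₁_nonneg v hv) (hw₂_nonneg v hv)
  have hΔ : (∫⁻ v, ENNReal.ofReal |w₁ v - w₂ v| ∂ρ) = ε + ε := by
    have habs : ∀ v, ENNReal.ofReal |w₁ v - w₂ v| = c₁ v + c₂ v := by
      intro v
      rw [hc₁_def, hc₂_def]
      have h : |w₁ v - w₂ v| = (w₁ v - m v) + (w₂ v - m v) := by
        rcases le_total (w₁ v) (w₂ v) with h | h
        · rw [abs_of_nonpos (by linarith), hm_def]
          simp only [min_eq_left h]
          ring
        · rw [abs_of_nonneg (by linarith), hm_def]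
          simp only [min_eq_right h]
          ring
      rw [h, ENNReal.ofReal_add (sub_nonneg.mpr (min_le_left _ _))
        (sub_nonneg.mpr (min_le_right _ _))]
    simp only [habs]
    rw [lintegral_add_left' hc₁ _, hδ₁, hδ₂]
  -- mixture measures
  set ν : Measure E := mix ρ μ hμsetwise c₀ hc₀ with hν_def
  set P₁ : Measure E := mix ρ μ hμsetwise c₁ hc₁ with hP₁_def
  set Q₁ : Measure E := mix ρ μ hμsetwise c₂ hc₂ with hQ₁_def
  have hν_apply : ∀ s : Set E, MeasurableSet s → ν s = ∫⁻ v, c₀ v * μ v s ∂ρ :=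
    fun s hs => mix_apply ρ μ hμsetwise c₀ hc₀ hs
  have hP₁_apply : ∀ s : Set E, MeasurableSet s → P₁ s = ∫⁻ v, c₁ v * μ v s ∂ρ :=
    fun s hs => mix_apply ρ μ hμsetwise c₁ hc₁ hs
  have hQ₁_apply : ∀ s : Set E, MeasurableSet s → Q₁ s = ∫⁻ v, c₂ v * μ v s ∂ρ :=
    fun s hs => mix_apply ρ μ hμsetwise c₂ hc₂ hs
  have hmass : ∀ (c : ℝ → ℝ≥0∞) (σ : Measure E),
      (∀ s : Set E, MeasurableSet s → σ s = ∫⁻ v, c v * μ v s ∂ρ) →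
      σ Set.univ = ∫⁻ v, c v ∂ρ := by
    intro c σ hσ
    rw [hσ _ MeasurableSet.univ]
    refine lintegral_congr_ae ?_
    filter_upwards [hae_mem] with v hv
    rw [(hμprob v hv).measure_univ, mul_one]
  have hν_univ : ν Set.univ = ENNReal.ofReal im := by rw [hmass c₀ ν hν_apply, hδ₀]
  have hP₁_univ : P₁ Set.univ = ε := by rw [hmass c₁ P₁ hP₁_apply, hδ₁]
  have hQ₁_univ : Q₁ Set.univ = ε := by rw [hmass c₂ Q₁ hQ₁_apply, hδ₂]
  have hνfin : IsFiniteMeasure ν := ⟨by rw [hν_univ]; exact ENNReal.ofReal_lt_top⟩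
  have hP₁fin : IsFiniteMeasure P₁ := ⟨by rw [hP₁_univ, hε_def]; exact ENNReal.ofReal_lt_top⟩
  have hQ₁fin : IsFiniteMeasure Q₁ := ⟨by rw [hQ₁_univ, hε_def]; exact ENNReal.ofReal_lt_top⟩
  -- decompositions
  have hPsplit : P = ν + P₁ := by
    refine Measure.ext fun s hs => ?_
    rw [Measure.add_apply, hν_apply s hs, hP₁_apply s hs, hP s hs,
      ← lintegral_add_left' (hc₀.fun_mul (hμsetwise s hs)) _]
    refine lintegral_congr_ae ?_
    filter_upwards [hae_mem] with v hv
    simp only [hc₀_def, hc₁_def]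
    rw [← add_mul]
    congr 1
    rw [← ENNReal.ofReal_add (le_min (hw₁_nonneg v hv) (hw₂_nonneg v hv))
      (sub_nonneg.mpr (min_le_left _ _))]
    congr 1
    ring
  have hQsplit : Q = ν + Q₁ := by
    refine Measure.ext fun s hs => ?_
    rw [Measure.add_apply, hν_apply s hs, hQ₁_apply s hs, hQ s hs,
      ← lintegral_add_left' (hc₀.fun_mul (hμsetwise s hs)) _]
    refine lintegral_congr_ae ?_
    filter_upwards [hae_mem] with v hv
    simp only [hc₀_def, hc₂_def]
    rw [← add_mul]
    congr 1
    rw [← ENNReal.ofReal_add (le_min (hw₁_nonneg v hv) (hw₂_nonneg v hv))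
      (sub_nonneg.mpr (min_le_right _ _))]
    congr 1
    ring
  -- second moment bounds
  have hM : ∀ (c : ℝ → ℝ≥0∞) (hc : AEMeasurable c ρ) (σ : Measure E),
      (∀ s : Set E, MeasurableSet s → σ s = ∫⁻ v, c v * μ v s ∂ρ) →
      ∫⁻ x, (‖x‖₊ : ℝ≥0∞) ^ 2 ∂σ ≤ (∫⁻ v, c v ∂ρ) * ENNReal.ofReal K := by
    intro c hc σ hσ
    rw [lintegral_mixture ρ μ hμsetwise c hc σ hσ hnorm_meas]
    calc ∫⁻ v, c v * ∫⁻ x, (‖x‖₊ : ℝ≥0∞) ^ 2 ∂(μ v) ∂ρ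
        ≤ ∫⁻ v, c v * ENNReal.ofReal K ∂ρ := by
          refine lintegral_mono_ae ?_
          filter_upwards [hae_mem] with v hv
          exact mul_le_mul_right (hμmom v hv) _
      _ = (∫⁻ v, c v ∂ρ) * ENNReal.ofReal K := lintegral_mul_const'' _ hc
  have hM₁ : ∫⁻ x, (‖x‖₊ : ℝ≥0∞) ^ 2 ∂P₁ ≤ ε * ENNReal.ofReal K := by
    have := hM c₁ hc₁ P₁ hP₁_apply
    rwa [hδ₁] at this
  have hM₂ : ∫⁻ x, (‖x‖₊ : ℝ≥0∞) ^ 2 ∂Q₁ ≤ ε * ENNReal.ofReal K := by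
    have := hM c₂ hc₂ Q₁ hQ₁_apply
    rwa [hδ₂] at this
  by_cases hε : ε = 0
  · -- degenerate case : P = Q
    have hP₁0 : P₁ = 0 := by
      rw [← Measure.measure_univ_eq_zero, hP₁_univ, hε]
    have hQ₁0 : Q₁ = 0 := by
      rw [← Measure.measure_univ_eq_zero, hQ₁_univ, hε]
    have hPQ : P = Q := by rw [hPsplit, hQsplit, hP₁0, hQ₁0]
    have hπ_prob : IsProbabilityMeasure (P.map (fun x : E => (x, x))) :=
      Measure.isProbabilityMeasure_map hdiag_meas.aemeasurable
    have h1 : (P.map fun x : E => (x, x)).map Prod.fst = P := by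
      rw [Measure.map_map measurable_fst hdiag_meas]
      exact Measure.map_id
    have h2 : (P.map fun x : E => (x, x)).map Prod.snd = Q := by
      rw [Measure.map_map measurable_snd hdiag_meas, ← hPQ]
      exact Measure.map_id
    refine le_trans (hW2le _ hπ_prob h1 h2) ?_
    rw [lintegral_map hcost_meas hdiag_meas]
    simp
  · -- main case
    set π : Measure (E × E) := ν.map (fun x => (x, x)) + (ε⁻¹ • (P₁.prod Q₁)) with hπ_def
    have hprod_univ : (P₁.prod Q₁) Set.univ = ε * ε := by
      rw [← Set.univ_prod_univ, Measure.prod_prod, hP₁_univ, hQ₁_univ]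
    have hπ_prob : IsProbabilityMeasure π := by
      constructor
      rw [hπ_def, Measure.add_apply, Measure.smul_apply, smul_eq_mul, hprod_univ,
        ← mul_assoc, ENNReal.inv_mul_cancel hε hεtop, one_mul,
        Measure.map_apply hdiag_meas MeasurableSet.univ, Set.preimage_univ, hν_univ, hε_def,
        ← ENNReal.ofReal_add him0 (by linarith)]
      norm_num
    have hfst : π.map Prod.fst = P := by
      rw [hπ_def, Measure.map_add _ _ measurable_fst, Measure.map_map measurable_fst hdiag_meas,
        Measure.map_smul, Measure.map_fst_prod, hQ₁_univ, smul_smul,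
        ENNReal.inv_mul_cancel hε hεtop, one_smul, hPsplit]
      congr 1
      exact Measure.map_id
    have hsnd : π.map Prod.snd = Q := by
      rw [hπ_def, Measure.map_add _ _ measurable_snd, Measure.map_map measurable_snd hdiag_meas,
        Measure.map_smul, Measure.map_snd_prod, hP₁_univ, smul_smul,
        ENNReal.inv_mul_cancel hε hεtop, one_smul, hQsplit]
      congr 1
      exact Measure.map_id
    refine le_trans (hW2le π hπ_prob hfst hsnd) ?_
    have hdiag0 : ∫⁻ p, (‖p.1 - p.2‖₊ : ℝ≥0∞) ^ 2 ∂(ν.map fun x : E => (x, x)) = 0 := by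
      rw [lintegral_map hcost_meas hdiag_meas]
      simp
    have hfst_cost : ∫⁻ p : E × E, (‖p.1‖₊ : ℝ≥0∞) ^ 2 ∂(P₁.prod Q₁)
        = ε * ∫⁻ x, (‖x‖₊ : ℝ≥0∞) ^ 2 ∂P₁ := by
      rw [← lintegral_map hnorm_meas measurable_fst, Measure.map_fst_prod, hQ₁_univ,
        lintegral_smul_measure, smul_eq_mul]
    have hsnd_cost : ∫⁻ p : E × E, (‖p.2‖₊ : ℝ≥0∞) ^ 2 ∂(P₁.prod Q₁)
        = ε * ∫⁻ x, (‖x‖₊ : ℝ≥0∞) ^ 2 ∂Q₁ := by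
      rw [← lintegral_map hnorm_meas measurable_snd, Measure.map_snd_prod, hP₁_univ,
        lintegral_smul_measure, smul_eq_mul]
    have hprod_cost : ∫⁻ p, (‖p.1 - p.2‖₊ : ℝ≥0∞) ^ 2 ∂(P₁.prod Q₁)
        ≤ 2 * (ε * (ε * ENNReal.ofReal K)) + 2 * (ε * (ε * ENNReal.ofReal K)) := by
      calc ∫⁻ p, (‖p.1 - p.2‖₊ : ℝ≥0∞) ^ 2 ∂(P₁.prod Q₁)
          ≤ ∫⁻ p : E × E, (2 * (‖p.1‖₊ : ℝ≥0∞) ^ 2 + 2 * (‖p.2‖₊ : ℝ≥0∞) ^ 2) ∂(P₁.prod Q₁) :=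
            lintegral_mono fun p => sq_norm_sub_le p.1 p.2
        _ = (∫⁻ p : E × E, 2 * (‖p.1‖₊ : ℝ≥0∞) ^ 2 ∂(P₁.prod Q₁))
              + ∫⁻ p : E × E, 2 * (‖p.2‖₊ : ℝ≥0∞) ^ 2 ∂(P₁.prod Q₁) :=
            lintegral_add_left ((hnorm_meas.comp measurable_fst).const_mul 2) _
        _ = 2 * (ε * ∫⁻ x, (‖x‖₊ : ℝ≥0∞) ^ 2 ∂P₁) + 2 * (ε * ∫⁻ x, (‖x‖₊ : ℝ≥0∞) ^ 2 ∂Q₁) := by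
            rw [lintegral_const_mul 2 (show Measurable fun p : E × E => (‖p.1‖₊ : ℝ≥0∞) ^ 2 from
                hnorm_meas.comp measurable_fst),
              lintegral_const_mul 2 (show Measurable fun p : E × E => (‖p.2‖₊ : ℝ≥0∞) ^ 2 from
                hnorm_meas.comp measurable_snd), hfst_cost, hsnd_cost]
        _ ≤ 2 * (ε * (ε * ENNReal.ofReal K)) + 2 * (ε * (ε * ENNReal.ofReal K)) :=
            add_le_add (mul_le_mul_right (mul_le_mul_right hM₁ ε) 2)
              (mul_le_mul_right (mul_le_mul_right hM₂ ε) 2)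
    rw [hπ_def, lintegral_add_measure, hdiag0, zero_add, lintegral_smul_measure, hΔ]
    calc ε⁻¹ * ∫⁻ p, (‖p.1 - p.2‖₊ : ℝ≥0∞) ^ 2 ∂(P₁.prod Q₁)
        ≤ ε⁻¹ * (2 * (ε * (ε * ENNReal.ofReal K)) + 2 * (ε * (ε * ENNReal.ofReal K))) :=
          mul_le_mul_right hprod_cost _
      _ = (ε⁻¹ * ε) * (2 * (ε * ENNReal.ofReal K) + 2 * (ε * ENNReal.ofReal K)) := by ring
      _ = 2 * ENNReal.ofReal K * (ε + ε) := by
          rw [ENNReal.inv_mul_cancel hε hεtop, one_mul]; ring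
      _ = ENNReal.ofReal (2 * K) * (ε + ε) := by
          rw [ENNReal.ofReal_mul (by norm_num : (0:ℝ) ≤ 2)]
          norm_num

end
end

section
/- Let G : [0,1]×[0,1] → [0,∞) be a graphon (measurable, symmetric, bounded) with degrees bounded below by c > 0, and let (μ^v)_{v∈[0,1]} be a setwise measurable family of Borel probability measures on ℝ^d with ∫ |x|² dμ^v(x) ≤ K for every v ∈ [0,1]. Then for all u₁, u₂ ∈ [0,1], W₂²([Gμ]^{u₁}, [Gμ]^{u₂}) ≤ (4K/c) ∫₀¹ |G(u₁,v) − G(u₂,v)| dv. -/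
open MeasureTheory ENNReal

noncomputable section

/-- `ν` is the graphon aggregate family `[Gμ]` of the family `μ`. -/
def IsGraphonAggregate {E : Type*} [MeasurableSpace E] (G : ℝ → ℝ → ℝ)
    (μ ν : ℝ → Measure E) : Prop :=
  ∀ u ∈ Set.Icc (0:ℝ) 1, IsProbabilityMeasure (ν u) ∧
    ∀ B : Set E, MeasurableSet B →
      ν u B = ∫⁻ v in Set.Icc (0:ℝ) 1, ENNReal.ofReal (gnorm G u v) * μ v B

open NNReal

namespace GraphonAux

variable {E : Type*} [MeasurableSpace E]

/-- The mixture measure `B ↦ ∫⁻ v in [0,1], (w v) • μ v B`. -/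
def mix (w : ℝ → ℝ) (μ : ℝ → Measure E) (hw : Measurable w)
    (hμ : ∀ B : Set E, MeasurableSet B →
      AEMeasurable (fun v => μ v B) (volume.restrict (Set.Icc (0:ℝ) 1))) : Measure E :=
  Measure.ofMeasurable (fun B _ => ∫⁻ v in Set.Icc (0:ℝ) 1, ENNReal.ofReal (w v) * μ v B)
    (by simp)
    (by
      intro f hf hdisj
      have h1 : ∀ v, μ v (⋃ i, f i) = ∑' i, μ v (f i) := fun v => measure_iUnion hdisj hf
      calc ∫⁻ v in Set.Icc (0:ℝ) 1, ENNReal.ofReal (w v) * μ v (⋃ i, f i)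
          = ∫⁻ v in Set.Icc (0:ℝ) 1, ∑' i, ENNReal.ofReal (w v) * μ v (f i) := by
            simp_rw [h1, ENNReal.tsum_mul_left]
        _ = ∑' i, ∫⁻ v in Set.Icc (0:ℝ) 1, ENNReal.ofReal (w v) * μ v (f i) :=
            lintegral_tsum fun i => (hw.ennreal_ofReal.aemeasurable.mul (hμ _ (hf i))))

lemma mix_apply (w : ℝ → ℝ) (μ : ℝ → Measure E) (hw : Measurable w)
    (hμ : ∀ B : Set E, MeasurableSet B →
      AEMeasurable (fun v => μ v B) (volume.restrict (Set.Icc (0:ℝ) 1)))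
    {B : Set E} (hB : MeasurableSet B) :
    mix w μ hw hμ B = ∫⁻ v in Set.Icc (0:ℝ) 1, ENNReal.ofReal (w v) * μ v B :=
  Measure.ofMeasurable_apply B hB

lemma mix_congr {w w' : ℝ → ℝ} {μ : ℝ → Measure E} {hw : Measurable w} {hw' : Measurable w'}
    {hμ : ∀ B : Set E, MeasurableSet B →
      AEMeasurable (fun v => μ v B) (volume.restrict (Set.Icc (0:ℝ) 1))}
    (hww' : ∀ v, w v = w' v) : mix w μ hw hμ = mix w' μ hw' hμ :=
  Measure.ext fun B hB => by rw [mix_apply _ _ _ _ hB, mix_apply _ _ _ _ hB]; simp only [hww']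

lemma mix_univ (w : ℝ → ℝ) (μ : ℝ → Measure E) (hw : Measurable w)
    (hμ : ∀ B : Set E, MeasurableSet B →
      AEMeasurable (fun v => μ v B) (volume.restrict (Set.Icc (0:ℝ) 1)))
    (hprob : ∀ v ∈ Set.Icc (0:ℝ) 1, IsProbabilityMeasure (μ v)) :
    mix w μ hw hμ Set.univ = ∫⁻ v in Set.Icc (0:ℝ) 1, ENNReal.ofReal (w v) := by
  rw [mix_apply _ _ _ _ MeasurableSet.univ]
  refine lintegral_congr_ae ?_
  filter_upwards [ae_restrict_mem measurableSet_Icc] with v hv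
  have := (hprob v hv).measure_univ
  rw [this, mul_one]

lemma mix_add {w₁ w₂ : ℝ → ℝ} {μ : ℝ → Measure E} (hw₁ : Measurable w₁) (hw₂ : Measurable w₂)
    (hμ : ∀ B : Set E, MeasurableSet B →
      AEMeasurable (fun v => μ v B) (volume.restrict (Set.Icc (0:ℝ) 1)))
    (h1 : ∀ v, 0 ≤ w₁ v) (h2 : ∀ v, 0 ≤ w₂ v) :
    mix (fun v => w₁ v + w₂ v) μ (hw₁.add hw₂) hμ = mix w₁ μ hw₁ hμ + mix w₂ μ hw₂ hμ := by
  ext B hB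
  rw [Measure.add_apply, mix_apply _ _ _ _ hB, mix_apply _ _ _ _ hB, mix_apply _ _ _ _ hB]
  simp_rw [ENNReal.ofReal_add (h1 _) (h2 _), add_mul]
  exact lintegral_add_left' (hw₁.ennreal_ofReal.aemeasurable.mul (hμ _ hB)) _

lemma mix_lintegral_le (w : ℝ → ℝ) (μ : ℝ → Measure E) (hw : Measurable w)
    (hμ : ∀ B : Set E, MeasurableSet B →
      AEMeasurable (fun v => μ v B) (volume.restrict (Set.Icc (0:ℝ) 1)))
    (h : E → ℝ≥0∞) (K' : ℝ≥0∞) (hK' : K' ≠ ∞)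
    (hmom : ∀ v ∈ Set.Icc (0:ℝ) 1, ∫⁻ x, h x ∂(μ v) ≤ K') :
    ∫⁻ x, h x ∂(mix w μ hw hμ) ≤ (∫⁻ v in Set.Icc (0:ℝ) 1, ENNReal.ofReal (w v)) * K' := by
  rw [lintegral_def]
  refine iSup₂_le fun φ hφ => ?_
  have hfib : ∀ x : ℝ≥0∞, MeasurableSet (φ ⁻¹' {x}) := fun x => φ.measurableSet_fiber x
  have e1 : ∀ x ∈ φ.range, x * (mix w μ hw hμ) (φ ⁻¹' {x})
      = ∫⁻ v in Set.Icc (0:ℝ) 1, x * (ENNReal.ofReal (w v) * μ v (φ ⁻¹' {x})) := by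
    intro x _
    rw [mix_apply _ _ _ _ (hfib x)]
    exact (lintegral_const_mul'' x (hw.ennreal_ofReal.aemeasurable.mul (hμ _ (hfib x)))).symm
  calc φ.lintegral (mix w μ hw hμ)
      = ∑ x ∈ φ.range, x * (mix w μ hw hμ) (φ ⁻¹' {x}) := rfl
    _ = ∑ x ∈ φ.range, ∫⁻ v in Set.Icc (0:ℝ) 1, x * (ENNReal.ofReal (w v) * μ v (φ ⁻¹' {x})) :=
        Finset.sum_congr rfl e1
    _ = ∫⁻ v in Set.Icc (0:ℝ) 1, ∑ x ∈ φ.range, x * (ENNReal.ofReal (w v) * μ v (φ ⁻¹' {x})) :=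
        (lintegral_finset_sum' _ fun x _ =>
          ((hw.ennreal_ofReal.aemeasurable.mul (hμ _ (hfib x))).const_mul x)).symm
    _ ≤ ∫⁻ v in Set.Icc (0:ℝ) 1, ENNReal.ofReal (w v) * K' := by
        refine lintegral_mono_ae ?_
        filter_upwards [ae_restrict_mem measurableSet_Icc] with v hv
        calc ∑ x ∈ φ.range, x * (ENNReal.ofReal (w v) * μ v (φ ⁻¹' {x}))
            = ENNReal.ofReal (w v) * φ.lintegral (μ v) := by
              simp [SimpleFunc.lintegral, Finset.mul_sum, mul_left_comm]
          _ = ENNReal.ofReal (w v) * ∫⁻ x, φ x ∂(μ v) := by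
              rw [φ.lintegral_eq_lintegral]
          _ ≤ ENNReal.ofReal (w v) * K' := by
              gcongr
              exact (lintegral_mono hφ).trans (hmom v hv)
    _ = (∫⁻ v in Set.Icc (0:ℝ) 1, ENNReal.ofReal (w v)) * K' :=
        lintegral_mul_const' K' _ hK'

end GraphonAux

open GraphonAux

/-- **Label continuity of the graphon aggregate**:
`W₂²([Gμ]^{u₁}, [Gμ]^{u₂}) ≤ (4K/c) ∫₀¹ |G(u₁,v) − G(u₂,v)| dv`. -/
theorem graphon_aggregate_label_continuity
    (d : ℕ) (G : ℝ → ℝ → ℝ) (c K : ℝ) (hc : 0 < c)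
    (hGmeas : Measurable (Function.uncurry G))
    (hGsymm : ∀ u v, G u v = G v u)
    (hGnonneg : ∀ u v, 0 ≤ G u v)
    (hGbdd : ∃ M : ℝ, ∀ u v, G u v ≤ M)
    (hGdeg : ∀ u ∈ Set.Icc (0:ℝ) 1, c ≤ ∫ v in Set.Icc (0:ℝ) 1, G u v)
    (μ : ℝ → Measure (EuclideanSpace ℝ (Fin d)))
    (hμprob : ∀ v ∈ Set.Icc (0:ℝ) 1, IsProbabilityMeasure (μ v))
    (hμsetwise : ∀ B : Set (EuclideanSpace ℝ (Fin d)), MeasurableSet B →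
      AEMeasurable (fun v => μ v B) (volume.restrict (Set.Icc (0:ℝ) 1)))
    (hμmom : ∀ v ∈ Set.Icc (0:ℝ) 1,
      ∫⁻ x, (‖x‖₊ : ℝ≥0∞) ^ 2 ∂(μ v) ≤ ENNReal.ofReal K)
    (agg : ℝ → Measure (EuclideanSpace ℝ (Fin d)))
    (hagg : IsGraphonAggregate G μ agg)
    (u₁ u₂ : ℝ) (hu₁ : u₁ ∈ Set.Icc (0:ℝ) 1) (hu₂ : u₂ ∈ Set.Icc (0:ℝ) 1) :
    W2sq (agg u₁) (agg u₂) ≤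
      ENNReal.ofReal (4 * K / c) *
        ∫⁻ v in Set.Icc (0:ℝ) 1, ENNReal.ofReal |G u₁ v - G u₂ v| := by
  classical
  set E := EuclideanSpace ℝ (Fin d)
  obtain ⟨M, hM⟩ := hGbdd
  set I : Set ℝ := Set.Icc (0:ℝ) 1 with hI
  -- sections of G are measurable
  have hG1 : Measurable (G u₁) := hGmeas.comp measurable_prodMk_left
  have hG2 : Measurable (G u₂) := hGmeas.comp measurable_prodMk_left
  -- degrees
  set D₁ : ℝ := ∫ w in I, G u₁ w with hD₁def
  set D₂ : ℝ := ∫ w in I, G u₂ w with hD₂def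
  have hD₁c : c ≤ D₁ := hGdeg u₁ hu₁
  have hD₂c : c ≤ D₂ := hGdeg u₂ hu₂
  have hD₁ : 0 < D₁ := lt_of_lt_of_le hc hD₁c
  have hD₂ : 0 < D₂ := lt_of_lt_of_le hc hD₂c
  -- normalized graphon sections
  set g₁ : ℝ → ℝ := fun v => G u₁ v / D₁ with hg₁def
  set g₂ : ℝ → ℝ := fun v => G u₂ v / D₂ with hg₂def
  have hg₁meas : Measurable g₁ := hG1.div_const _
  have hg₂meas : Measurable g₂ := hG2.div_const _
  have hg₁0 : ∀ v, 0 ≤ g₁ v := fun v => div_nonneg (hGnonneg _ _) hD₁.le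
  have hg₂0 : ∀ v, 0 ≤ g₂ v := fun v => div_nonneg (hGnonneg _ _) hD₂.le
  set hmin : ℝ → ℝ := fun v => min (g₁ v) (g₂ v) with hmindef
  set f₁ : ℝ → ℝ := fun v => g₁ v - hmin v with hf₁def
  set f₂ : ℝ → ℝ := fun v => g₂ v - hmin v with hf₂def
  have hminmeas : Measurable hmin := hg₁meas.min hg₂meas
  have hf₁meas : Measurable f₁ := hg₁meas.sub hminmeas
  have hf₂meas : Measurable f₂ := hg₂meas.sub hminmeas
  have hmin0 : ∀ v, 0 ≤ hmin v := fun v => le_min (hg₁0 v) (hg₂0 v)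
  have hf₁0 : ∀ v, 0 ≤ f₁ v := fun v => sub_nonneg.2 (min_le_left _ _)
  have hf₂0 : ∀ v, 0 ≤ f₂ v := fun v => sub_nonneg.2 (min_le_right _ _)
  -- integrability of bounded measurable functions on I
  have hIfin : volume I ≠ ∞ := isCompact_Icc.measure_lt_top.ne
  have hint : ∀ (F : ℝ → ℝ) (C : ℝ), Measurable F → (∀ v, |F v| ≤ C) →
      IntegrableOn F I volume := by
    intro F C hF hC
    exact Measure.integrableOn_of_bounded hIfin hF.aestronglyMeasurable (ae_of_all _ hC)
  have hM0 : 0 ≤ M := le_trans (hGnonneg 0 0) (hM 0 0)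
  have habs : ∀ u v, u ∈ I → |G u v| ≤ M := fun u v _ => by
    rw [abs_of_nonneg (hGnonneg u v)]; exact hM u v
  have hintG1 : IntegrableOn (G u₁) I volume :=
    hint _ M hG1 (fun v => by rw [abs_of_nonneg (hGnonneg _ _)]; exact hM _ _)
  have hintG2 : IntegrableOn (G u₂) I volume :=
    hint _ M hG2 (fun v => by rw [abs_of_nonneg (hGnonneg _ _)]; exact hM _ _)
  have hg₁bd : ∀ v, |g₁ v| ≤ M / c := by
    intro v
    rw [abs_of_nonneg (hg₁0 v)]
    exact div_le_div₀ (by positivity) (hM _ _) hc hD₁c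
  have hg₂bd : ∀ v, |g₂ v| ≤ M / c := by
    intro v
    rw [abs_of_nonneg (hg₂0 v)]
    exact div_le_div₀ (by positivity) (hM _ _) hc hD₂c
  have hintg₁ : IntegrableOn g₁ I volume := hint _ _ hg₁meas hg₁bd
  have hintg₂ : IntegrableOn g₂ I volume := hint _ _ hg₂meas hg₂bd
  have hminbd : ∀ v, |hmin v| ≤ M / c := fun v => by
    rw [abs_of_nonneg (hmin0 v)]; exact le_trans (min_le_left _ _)
      (le_trans (le_abs_self _) (hg₁bd v))
  have hintmin : IntegrableOn hmin I volume := hint _ _ hminmeas hminbd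
  have hintf₁ : IntegrableOn f₁ I volume := hintg₁.sub hintmin
  have hintf₂ : IntegrableOn f₂ I volume := hintg₂.sub hintmin
  -- real integrals
  have intg₁ : ∫ v in I, g₁ v = 1 := by
    rw [hg₁def]
    simp only [integral_div]
    exact div_self hD₁.ne'
  have intg₂ : ∫ v in I, g₂ v = 1 := by
    rw [hg₂def]
    simp only [integral_div]
    exact div_self hD₂.ne'
  have intf₁f₂ : ∫ v in I, f₁ v = ∫ v in I, f₂ v := by
    rw [hf₁def, hf₂def, integral_sub hintg₁ hintmin, integral_sub hintg₂ hintmin, intg₁, intg₂]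
  -- the key real inequality : c * ∫ f₁ ≤ ∫ |ΔG|
  set Dr : ℝ := ∫ v in I, |G u₁ v - G u₂ v| with hDrdef
  have hDr0 : 0 ≤ Dr := integral_nonneg fun v => abs_nonneg _
  have hintabs : IntegrableOn (fun v => |G u₁ v - G u₂ v|) I volume :=
    (hintG1.sub hintG2).abs
  have hDdiff : |D₁ - D₂| ≤ Dr := by
    rw [hD₁def, hD₂def, ← integral_sub hintG1 hintG2]
    calc |∫ v in I, (G u₁ v - G u₂ v)| ≤ ∫ v in I, ‖G u₁ v - G u₂ v‖ := by
          rw [← Real.norm_eq_abs]; exact norm_integral_le_integral_norm _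
      _ = Dr := by simp only [Real.norm_eq_abs, hDrdef]
  have hptw : ∀ v, |g₁ v - g₂ v| ≤ |G u₁ v - G u₂ v| / D₁ + G u₂ v * |1/D₁ - 1/D₂| := by
    intro v
    have : g₁ v - g₂ v = (G u₁ v - G u₂ v) / D₁ + G u₂ v * (1/D₁ - 1/D₂) := by
      rw [hg₁def, hg₂def]
      field_simp
      ring
    rw [this]
    refine (abs_add_le _ _).trans ?_
    rw [abs_div, abs_of_pos hD₁, abs_mul, abs_of_nonneg (hGnonneg u₂ v)]
  have habsdiff : ∫ v in I, |g₁ v - g₂ v| ≤ 2 * Dr / D₁ := by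
    have h1 : ∫ v in I, |g₁ v - g₂ v| ≤
        ∫ v in I, (|G u₁ v - G u₂ v| / D₁ + G u₂ v * |1/D₁ - 1/D₂|) := by
      refine integral_mono (hintg₁.sub hintg₂).abs ?_ hptw
      exact (hintabs.div_const _).add (hintG2.mul_const _)
    have h2 : ∫ v in I, (|G u₁ v - G u₂ v| / D₁ + G u₂ v * |1/D₁ - 1/D₂|)
        = Dr / D₁ + D₂ * |1/D₁ - 1/D₂| := by
      rw [integral_add (hintabs.div_const _) (hintG2.mul_const _), integral_div,
        integral_mul_const]
    have h3 : D₂ * |1/D₁ - 1/D₂| ≤ Dr / D₁ := by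
      have : |1/D₁ - 1/D₂| = |D₂ - D₁| / (D₁ * D₂) := by
        rw [div_sub_div _ _ hD₁.ne' hD₂.ne', abs_div, abs_of_pos (mul_pos hD₁ hD₂)]
        ring_nf
      rw [this]
      have h4 : |D₂ - D₁| ≤ Dr := by rwa [abs_sub_comm]
      have h5 : D₂ * (|D₂ - D₁| / (D₁ * D₂)) = |D₂ - D₁| / D₁ := by
        field_simp
      rw [h5]
      gcongr
    calc ∫ v in I, |g₁ v - g₂ v| ≤ Dr / D₁ + D₂ * |1/D₁ - 1/D₂| := h1.trans_eq h2
      _ ≤ Dr / D₁ + Dr / D₁ := by linarith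
      _ = 2 * Dr / D₁ := by ring
  have hf₁abs : ∀ v, f₁ v + f₂ v = |g₁ v - g₂ v| := by
    intro v
    simp only [hf₁def, hf₂def, hmindef]
    rcases le_total (g₁ v) (g₂ v) with hle | hle
    · rw [min_eq_left hle, abs_of_nonpos (by linarith)]; ring
    · rw [min_eq_right hle, abs_of_nonneg (by linarith)]; ring
  have hintf₁val : c * ∫ v in I, f₁ v ≤ Dr := by
    have h2 : 2 * ∫ v in I, f₁ v = ∫ v in I, |g₁ v - g₂ v| := by
      rw [two_mul]
      nth_rewrite 2 [intf₁f₂]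
      rw [← integral_add hintf₁ hintf₂]
      exact integral_congr_ae (ae_of_all _ hf₁abs)
    have hif₁ : ∫ v in I, f₁ v ≤ Dr / D₁ := by
      have h6 : 2 * ∫ v in I, f₁ v ≤ 2 * (Dr / D₁) := by
        rw [h2]
        calc ∫ v in I, |g₁ v - g₂ v| ≤ 2 * Dr / D₁ := habsdiff
          _ = 2 * (Dr / D₁) := by ring
      linarith
    have hf₁nn : 0 ≤ ∫ v in I, f₁ v := integral_nonneg hf₁0
    calc c * ∫ v in I, f₁ v ≤ D₁ * ∫ v in I, f₁ v := by gcongr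
      _ ≤ D₁ * (Dr / D₁) := by gcongr
      _ = Dr := by field_simp
  -- ENNReal quantities
  set K' : ℝ≥0∞ := ENNReal.ofReal K with hK'def
  set m : ℝ≥0∞ := ∫⁻ v in I, ENNReal.ofReal (f₁ v) with hmdef
  have hm : m = ENNReal.ofReal (∫ v in I, f₁ v) := by
    rw [hmdef, ← ofReal_integral_eq_lintegral_ofReal hintf₁ (ae_of_all _ hf₁0)]
  have hmtop : m ≠ ∞ := by rw [hm]; exact ofReal_ne_top
  have hm2 : ∫⁻ v in I, ENNReal.ofReal (f₂ v) = m := by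
    rw [hm, ← ofReal_integral_eq_lintegral_ofReal hintf₂ (ae_of_all _ hf₂0), intf₁f₂]
  set D' : ℝ≥0∞ := ∫⁻ v in I, ENNReal.ofReal |G u₁ v - G u₂ v| with hD'def
  have hD' : D' = ENNReal.ofReal Dr := by
    rw [hD'def, hDrdef, ofReal_integral_eq_lintegral_ofReal hintabs
      (ae_of_all _ fun v => abs_nonneg _)]
  have hkey : ENNReal.ofReal c * m ≤ D' := by
    rw [hm, hD', ← ENNReal.ofReal_mul hc.le]
    exact ENNReal.ofReal_le_ofReal hintf₁val
  -- the component measures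
  set α : Measure E := mix f₁ μ hf₁meas hμsetwise with hαdef
  set β : Measure E := mix f₂ μ hf₂meas hμsetwise with hβdef
  set lam : Measure E := mix hmin μ hminmeas hμsetwise with hlamdef
  have hαuniv : α Set.univ = m := by
    rw [hαdef, mix_univ _ _ _ _ hμprob, hmdef]
  have hβuniv : β Set.univ = m := by
    rw [hβdef, mix_univ _ _ _ _ hμprob, hm2]
  have haggeq₁ : agg u₁ = mix g₁ μ hg₁meas hμsetwise := by
    refine Measure.ext fun B hB => ?_
    rw [(hagg u₁ hu₁).2 B hB, mix_apply _ _ _ _ hB]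
    simp only [hg₁def, gnorm, hD₁def, hI]
  have haggeq₂ : agg u₂ = mix g₂ μ hg₂meas hμsetwise := by
    refine Measure.ext fun B hB => ?_
    rw [(hagg u₂ hu₂).2 B hB, mix_apply _ _ _ _ hB]
    simp only [hg₂def, gnorm, hD₂def, hI]
  have hlamα : lam + α = agg u₁ := by
    rw [hlamdef, hαdef, ← mix_add hminmeas hf₁meas hμsetwise hmin0 hf₁0, haggeq₁]
    exact mix_congr (hw' := hg₁meas) fun v => by simp only [hf₁def]; ring
  have hlamβ : lam + β = agg u₂ := by
    rw [hlamdef, hβdef, ← mix_add hminmeas hf₂meas hμsetwise hmin0 hf₂0, haggeq₂]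
    exact mix_congr (hw' := hg₂meas) fun v => by simp only [hf₂def]; ring
  have hlamuniv : lam Set.univ = ∫⁻ v in I, ENNReal.ofReal (hmin v) := by
    rw [hlamdef, mix_univ _ _ _ _ hμprob]
  have hsum : lam Set.univ + m = 1 := by
    rw [hlamuniv, hmdef, ← lintegral_add_left' hminmeas.ennreal_ofReal.aemeasurable]
    have hpt : ∀ v, ENNReal.ofReal (hmin v) + ENNReal.ofReal (f₁ v)
        = ENNReal.ofReal (g₁ v) := by
      intro v
      rw [← ENNReal.ofReal_add (hmin0 v) (hf₁0 v)]
      congr 1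
      simp only [hf₁def]
      ring
    rw [lintegral_congr hpt,
      ← ofReal_integral_eq_lintegral_ofReal hintg₁ (ae_of_all _ hg₁0), intg₁,
      ENNReal.ofReal_one]
  -- the coupling
  haveI hαfin : IsFiniteMeasure α := ⟨by rw [hαuniv]; exact lt_top_iff_ne_top.2 hmtop⟩
  haveI hβfin : IsFiniteMeasure β := ⟨by rw [hβuniv]; exact lt_top_iff_ne_top.2 hmtop⟩
  have hdiagmeas : Measurable (fun x : E => (x, x)) := measurable_id.prodMk measurable_id
  set π : Measure (E × E) := lam.map (fun x => (x, x)) + m⁻¹ • (α.prod β) with hπdef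
  have hmapfst : π.map Prod.fst = agg u₁ := by
    rw [hπdef, Measure.map_add _ _ measurable_fst, Measure.map_smul,
      Measure.map_map measurable_fst hdiagmeas, Measure.map_fst_prod, hβuniv]
    have hcomp : (Prod.fst ∘ fun x : E => (x, x)) = id := rfl
    rw [hcomp, Measure.map_id]
    have hsmul : m⁻¹ • (m • α) = α := by
      rcases eq_or_ne m 0 with hm0 | hm0
      · have hα0 : α = 0 := Measure.measure_univ_eq_zero.mp (by rw [hαuniv, hm0])
        simp [hα0]
      · rw [smul_smul, ENNReal.inv_mul_cancel hm0 hmtop, one_smul]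
    rw [hsmul, hlamα]
  have hmapsnd : π.map Prod.snd = agg u₂ := by
    rw [hπdef, Measure.map_add _ _ measurable_snd, Measure.map_smul,
      Measure.map_map measurable_snd hdiagmeas, Measure.map_snd_prod, hαuniv]
    have hcomp : (Prod.snd ∘ fun x : E => (x, x)) = id := rfl
    rw [hcomp, Measure.map_id]
    have hsmul : m⁻¹ • (m • β) = β := by
      rcases eq_or_ne m 0 with hm0 | hm0
      · have hβ0 : β = 0 := Measure.measure_univ_eq_zero.mp (by rw [hβuniv, hm0])
        simp [hβ0]
      · rw [smul_smul, ENNReal.inv_mul_cancel hm0 hmtop, one_smul]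
    rw [hsmul, hlamβ]
  have hπprob : IsProbabilityMeasure π := by
    constructor
    rw [hπdef, Measure.add_apply, Measure.smul_apply, smul_eq_mul,
      Measure.map_apply hdiagmeas MeasurableSet.univ]
    simp only [Set.preimage_univ]
    rw [← Set.univ_prod_univ, Measure.prod_prod, hαuniv, hβuniv]
    rcases eq_or_ne m 0 with hm0 | hm0
    · rw [hm0, mul_zero, mul_zero, add_zero]
      have := hsum
      rw [hm0, add_zero] at this
      exact this
    · rw [← mul_assoc, ENNReal.inv_mul_cancel hm0 hmtop, one_mul, hsum]
  -- measurability of the cost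
  have hnormsq : Measurable fun x : E => (‖x‖₊ : ℝ≥0∞) ^ 2 :=
    measurable_nnnorm.coe_nnreal_ennreal.pow_const 2
  have hcostmeas : Measurable fun p : E × E => (‖p.1 - p.2‖₊ : ℝ≥0∞) ^ 2 :=
    ((measurable_fst.sub measurable_snd).nnnorm).coe_nnreal_ennreal.pow_const 2
  -- second moments of the components
  have hMα : ∫⁻ x, (‖x‖₊ : ℝ≥0∞) ^ 2 ∂α ≤ m * K' := by
    have := mix_lintegral_le f₁ μ hf₁meas hμsetwise _ (ENNReal.ofReal K) ofReal_ne_top hμmom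
    rw [← hmdef] at this
    exact this
  have hMβ : ∫⁻ x, (‖x‖₊ : ℝ≥0∞) ^ 2 ∂β ≤ m * K' := by
    have := mix_lintegral_le f₂ μ hf₂meas hμsetwise _ (ENNReal.ofReal K) ofReal_ne_top hμmom
    rw [hm2] at this
    exact this
  -- cost on the product part
  have e1 : ∫⁻ p : E × E, ((‖p.1‖₊ : ℝ≥0∞)) ^ 2 ∂(α.prod β)
      = m * ∫⁻ x, (‖x‖₊ : ℝ≥0∞) ^ 2 ∂α := by
    have h := lintegral_map (μ := α.prod β) hnormsq measurable_fst
    rw [Measure.map_fst_prod, lintegral_smul_measure, hβuniv] at h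
    exact h.symm
  have e2 : ∫⁻ p : E × E, ((‖p.2‖₊ : ℝ≥0∞)) ^ 2 ∂(α.prod β)
      = m * ∫⁻ x, (‖x‖₊ : ℝ≥0∞) ^ 2 ∂β := by
    have h := lintegral_map (μ := α.prod β) hnormsq measurable_snd
    rw [Measure.map_snd_prod, lintegral_smul_measure, hαuniv] at h
    exact h.symm
  have hT : ∫⁻ p, (‖p.1 - p.2‖₊ : ℝ≥0∞) ^ 2 ∂(α.prod β) ≤ 4 * (m * (m * K')) := by
    have hptwise : ∀ p : E × E, (‖p.1 - p.2‖₊ : ℝ≥0∞) ^ 2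
        ≤ 2 * (‖p.1‖₊ : ℝ≥0∞) ^ 2 + 2 * (‖p.2‖₊ : ℝ≥0∞) ^ 2 := by
      intro p
      have h1 : ‖p.1 - p.2‖₊ ≤ ‖p.1‖₊ + ‖p.2‖₊ := nnnorm_sub_le _ _
      have h2 : (‖p.1‖₊ + ‖p.2‖₊) ^ 2 ≤ 2 * ‖p.1‖₊ ^ 2 + 2 * ‖p.2‖₊ ^ 2 := by
        rw [← NNReal.coe_le_coe]
        push_cast
        nlinarith [sq_nonneg (‖p.1‖ - ‖p.2‖), norm_nonneg p.1, norm_nonneg p.2]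
      calc (‖p.1 - p.2‖₊ : ℝ≥0∞) ^ 2 ≤ ((‖p.1‖₊ + ‖p.2‖₊ : ℝ≥0) : ℝ≥0∞) ^ 2 := by
            gcongr
        _ = (((‖p.1‖₊ + ‖p.2‖₊) ^ 2 : ℝ≥0) : ℝ≥0∞) := by push_cast; ring
        _ ≤ ((2 * ‖p.1‖₊ ^ 2 + 2 * ‖p.2‖₊ ^ 2 : ℝ≥0) : ℝ≥0∞) := by
            exact_mod_cast h2
        _ = 2 * (‖p.1‖₊ : ℝ≥0∞) ^ 2 + 2 * (‖p.2‖₊ : ℝ≥0∞) ^ 2 := by push_cast; ring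
    calc ∫⁻ p, (‖p.1 - p.2‖₊ : ℝ≥0∞) ^ 2 ∂(α.prod β)
        ≤ ∫⁻ p : E × E, (2 * (‖p.1‖₊ : ℝ≥0∞) ^ 2 + 2 * (‖p.2‖₊ : ℝ≥0∞) ^ 2) ∂(α.prod β) :=
          lintegral_mono hptwise
      _ = 2 * (∫⁻ p : E × E, ((‖p.1‖₊ : ℝ≥0∞)) ^ 2 ∂(α.prod β))
          + 2 * ∫⁻ p : E × E, ((‖p.2‖₊ : ℝ≥0∞)) ^ 2 ∂(α.prod β) := by
          have hmf : Measurable fun p : E × E => (‖p.1‖₊ : ℝ≥0∞) ^ 2 :=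
            hnormsq.comp measurable_fst
          have hms : Measurable fun p : E × E => (‖p.2‖₊ : ℝ≥0∞) ^ 2 :=
            hnormsq.comp measurable_snd
          have hmf2 : Measurable fun p : E × E => 2 * (‖p.1‖₊ : ℝ≥0∞) ^ 2 := hmf.const_mul 2
          rw [lintegral_add_left hmf2, lintegral_const_mul 2 hmf, lintegral_const_mul 2 hms]
      _ ≤ 2 * (m * (m * K')) + 2 * (m * (m * K')) := by
          rw [e1, e2]
          gcongr
      _ = 4 * (m * (m * K')) := by ring
  -- total cost bound
  have hmain : m⁻¹ * ∫⁻ p, (‖p.1 - p.2‖₊ : ℝ≥0∞) ^ 2 ∂(α.prod β)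
      ≤ ENNReal.ofReal (4 * K / c) * D' := by
    rcases eq_or_ne m 0 with hm0 | hm0
    · have hT0 : ∫⁻ p, (‖p.1 - p.2‖₊ : ℝ≥0∞) ^ 2 ∂(α.prod β) = 0 := by
        refine le_antisymm ?_ zero_le
        refine hT.trans_eq ?_
        rw [hm0]
        ring
      rw [hT0, mul_zero]
      exact zero_le
    · calc m⁻¹ * ∫⁻ p, (‖p.1 - p.2‖₊ : ℝ≥0∞) ^ 2 ∂(α.prod β)
          ≤ m⁻¹ * (4 * (m * (m * K'))) := by gcongr
        _ = 4 * K' * m := by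
            rw [show (4 : ℝ≥0∞) * (m * (m * K')) = m * (4 * K' * m) by ring, ← mul_assoc,
              ENNReal.inv_mul_cancel hm0 hmtop, one_mul]
        _ = ENNReal.ofReal (4 * K / c) * (ENNReal.ofReal c * m) := by
            rw [← mul_assoc, ← ENNReal.ofReal_mul' hc.le, div_mul_cancel₀ _ hc.ne',
              ENNReal.ofReal_mul (by norm_num : (0:ℝ) ≤ 4), ENNReal.ofReal_ofNat, hK'def]
        _ ≤ ENNReal.ofReal (4 * K / c) * D' := mul_le_mul_right hkey _
  have hcost : ∫⁻ p, (‖p.1 - p.2‖₊ : ℝ≥0∞) ^ 2 ∂π ≤ ENNReal.ofReal (4 * K / c) * D' := by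
    rw [hπdef, lintegral_add_measure, lintegral_smul_measure,
      lintegral_map hcostmeas hdiagmeas]
    have h0 : ∫⁻ x : E, (‖x - x‖₊ : ℝ≥0∞) ^ 2 ∂lam = 0 := by simp
    rw [h0, zero_add]
    exact hmain
  refine le_trans ?_ hcost
  exact iInf_le_of_le π (iInf_le_of_le hπprob (iInf_le_of_le hmapfst
    (iInf_le_of_le hmapsnd le_rfl)))

end
end

section
/- Let ε > 0 and let (μ^u)_{u∈[0,1]} be a family of Borel probability measures on ℝ^d such that the map u ↦ μ^u is measurable from [0,1] into the space of Borel probability measures on ℝ^d with the topology of weak convergence, and such that sup_{u∈[0,1]} ∫ |x|^{2+ε} dμ^u(x) < ∞. Then there exists a family (ξ^u)_{u∈[0,1]} of Borel measurable functions ξ^u : (0,1) → ℝ^d such that: (i) for every u ∈ [0,1], the pushforward of the Lebesgue measure on (0,1) under ξ^u equals μ^u; and (ii) the map u ↦ ξ^u, viewed as a map from [0,1] into the Banach space L²((0,1), Lebesgue; ℝ^d), is measurable. -/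
open MeasureTheory ENNReal NNReal Filter Topology Set

set_option linter.unusedSectionVars false

noncomputable section

namespace MeasL2Aux

variable {d : ℕ}

/-- dyadic address of `x` at level `n` -/
def addr (n : ℕ) (x : EuclideanSpace ℝ (Fin d)) : Fin d → ℤ := fun i => ⌊(2:ℝ) ^ n * x i⌋

/-- offset bits of an address relative to its parent -/
def ofs (c : Fin d → ℤ) : Fin d → Fin 2 := fun i => ⟨(c i % 2).toNat, by omega⟩

/-- consistent enumeration code of addresses at level `n` -/
def code : (n : ℕ) → (Fin d → ℤ) → ℕ
  | 0, c => Encodable.encode c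
  | n+1, c => 2 ^ d * code n (fun i => c i / 2) + (finFunctionFinEquiv (ofs c) : ℕ)

lemma ofs_lt (c : Fin d → ℤ) : (finFunctionFinEquiv (ofs c) : ℕ) < 2 ^ d :=
  (finFunctionFinEquiv (ofs c)).isLt

lemma nat_divmod_unique {B k1 k2 r1 r2 : ℕ} (hB : 0 < B) (h1 : r1 < B) (h2 : r2 < B)
    (h : B * k1 + r1 = B * k2 + r2) : k1 = k2 ∧ r1 = r2 := by
  have e1 : (B * k1 + r1) / B = k1 := by
    rw [Nat.mul_add_div hB, Nat.div_eq_of_lt h1]; ring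
  have e2 : (B * k2 + r2) / B = k2 := by
    rw [Nat.mul_add_div hB, Nat.div_eq_of_lt h2]; ring
  have hk : k1 = k2 := by rw [← e1, ← e2, h]
  subst hk
  exact ⟨rfl, Nat.add_left_cancel h⟩

lemma code_inj (n : ℕ) : Function.Injective (code (d := d) n) := by
  induction n with
  | zero => exact fun c c' h => Encodable.encode_injective h
  | succ n ih =>
    intro c c' h
    have h1 := ofs_lt c; have h2 := ofs_lt c'
    have hpos : 0 < 2 ^ d := pow_pos (by norm_num) d
    obtain ⟨hq, hr⟩ := nat_divmod_unique hpos h1 h2 h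
    have hofs : ofs c = ofs c' := finFunctionFinEquiv.injective (Fin.val_injective hr)
    have hpar := ih hq
    funext i
    have h1 : c i / 2 = c' i / 2 := congrFun hpar i
    have h2 : ofs c i = ofs c' i := congrFun hofs i
    simp only [ofs, Fin.mk.injEq] at h2
    omega

lemma addr_parent (n : ℕ) (x : EuclideanSpace ℝ (Fin d)) :
    addr n x = fun i => addr (n+1) x i / 2 := by
  funext i
  simp only [addr]
  set y : ℝ := (2:ℝ) ^ n * x i with hy
  have h2y : (2:ℝ) ^ (n+1) * x i = 2 * y := by rw [hy]; ring
  rw [h2y]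
  have h1 : (2 * ⌊y⌋ : ℤ) ≤ ⌊2 * y⌋ := by
    rw [Int.le_floor]; push_cast; linarith [Int.floor_le y]
  have h2 : ⌊2 * y⌋ < 2 * ⌊y⌋ + 2 := by
    rw [Int.floor_lt]; push_cast; linarith [Int.lt_floor_add_one y]
  omega

lemma code_succ (n : ℕ) (x : EuclideanSpace ℝ (Fin d)) :
    code (n+1) (addr (n+1) x)
      = 2 ^ d * code n (addr n x) + (finFunctionFinEquiv (ofs (addr (n+1) x)) : ℕ) := by
  rw [addr_parent n x]; rfl

lemma code_succ_lt_iff (n : ℕ) (x : EuclideanSpace ℝ (Fin d)) (k : ℕ) :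
    code (n+1) (addr (n+1) x) < 2 ^ d * k ↔ code n (addr n x) < k := by
  rw [code_succ]
  have hlt := ofs_lt (addr (n+1) (d := d) x)
  set B := 2 ^ d with hB
  set a := code n (addr n x) with ha
  set r := (finFunctionFinEquiv (ofs (addr (n+1) x)) : ℕ) with hrr
  have hpos : 0 < B := pow_pos (by norm_num) d
  constructor
  · intro h
    by_contra hk
    push_neg at hk
    have : B * k ≤ B * a := Nat.mul_le_mul_left _ hk
    have : B * k < B * k := lt_of_le_of_lt (le_trans this (Nat.le_add_right _ _)) h
    exact lt_irrefl _ this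
  · intro h
    calc B * a + r < B * a + B := by omega
      _ = B * (a + 1) := by ring
      _ ≤ B * k := Nat.mul_le_mul_left _ (by omega)

/-- corner of the cube with address `c` at level `n` -/
def corner (n : ℕ) (c : Fin d → ℤ) : EuclideanSpace ℝ (Fin d) :=
  (EuclideanSpace.equiv (Fin d) ℝ).symm fun i => (c i : ℝ) / 2 ^ n

@[simp] lemma corner_apply (n : ℕ) (c : Fin d → ℤ) (i : Fin d) :
    corner n c i = (c i : ℝ) / 2 ^ n := rfl

lemma norm_le_of_forall_abs_le {x : EuclideanSpace ℝ (Fin d)} {r : ℝ} (hr : 0 ≤ r)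
    (h : ∀ i, |x i| ≤ r) : ‖x‖ ≤ Real.sqrt d * r := by
  rw [EuclideanSpace.norm_eq]
  have : ∑ i : Fin d, ‖x i‖ ^ 2 ≤ (d : ℝ) * r ^ 2 := by
    calc ∑ i : Fin d, ‖x i‖ ^ 2 ≤ ∑ _i : Fin d, r ^ 2 := by
          apply Finset.sum_le_sum
          intro i _
          have := h i
          rw [Real.norm_eq_abs]
          nlinarith [abs_nonneg (x i)]
      _ = (d : ℝ) * r ^ 2 := by simp [Finset.sum_const, mul_comm]
  calc Real.sqrt (∑ i : Fin d, ‖x i‖ ^ 2) ≤ Real.sqrt ((d:ℝ) * r ^ 2) := Real.sqrt_le_sqrt this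
    _ = Real.sqrt d * r := by
        rw [Real.sqrt_mul (by positivity)]
        congr 1
        exact Real.sqrt_sq hr

section MeasurePart

/-- the cumulative set of the first `k` cubes at level `n` -/
def cset (d : ℕ) (n k : ℕ) : Set (EuclideanSpace ℝ (Fin d)) := {x | code n (addr n x) < k}

lemma measurable_addr (n : ℕ) : Measurable (addr (d := d) n) := by
  have hcoord : ∀ i : Fin d, Measurable fun x : EuclideanSpace ℝ (Fin d) => x i := by
    intro i
    exact (measurable_pi_apply i).comp (EuclideanSpace.equiv (Fin d) ℝ).continuous.measurable
  exact measurable_pi_lambda _ fun i => Int.measurable_floor.comp (measurable_const.mul (hcoord i))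

lemma measurable_codeaddr (n : ℕ) :
    Measurable fun x : EuclideanSpace ℝ (Fin d) => code n (addr n x) :=
  (measurable_of_countable _).comp (measurable_addr n)

lemma measurableSet_cset (n k : ℕ) : MeasurableSet (cset d n k) :=
  measurable_codeaddr n measurableSet_Iio

variable (m : Measure (EuclideanSpace ℝ (Fin d)))

/-- cumulative distribution values -/
def sR (n k : ℕ) : ℝ := (m (cset d n k)).toReal

lemma sR_nonneg (n k : ℕ) : 0 ≤ sR m n k := ENNReal.toReal_nonneg

lemma sR_zero (n : ℕ) : sR m n 0 = 0 := by
  have : cset d n 0 = ∅ := by ext x; simp [cset]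
  simp [sR, this]

variable [IsProbabilityMeasure m]

lemma sR_mono (n : ℕ) {k k' : ℕ} (h : k ≤ k') : sR m n k ≤ sR m n k' :=
  ENNReal.toReal_mono (measure_ne_top m _)
    (measure_mono fun x hx => lt_of_lt_of_le hx (by exact_mod_cast h))

lemma sR_le_one (n k : ℕ) : sR m n k ≤ 1 := by
  have := prob_le_one (μ := m) (s := cset d n k)
  calc (m (cset d n k)).toReal ≤ (1 : ℝ≥0∞).toReal :=
        ENNReal.toReal_mono (by simp) this
    _ = 1 := by simp

lemma sR_level (n k : ℕ) : sR m (n+1) (2 ^ d * k) = sR m n k := by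
  have : cset d (n+1) (2 ^ d * k) = cset d n k := by
    ext x; exact code_succ_lt_iff n x k
  rw [sR, this]; rfl

lemma tendsto_sR (n : ℕ) : Tendsto (fun k => sR m n k) atTop (𝓝 1) := by
  have hmono : Monotone fun k => cset d n k := by
    intro k k' hk x hx
    exact lt_of_lt_of_le hx (by exact_mod_cast hk)
  have hunion : (⋃ k, cset d n k) = Set.univ := by
    ext x
    simp only [Set.mem_iUnion, Set.mem_univ, iff_true]
    exact ⟨code n (addr n x) + 1, Nat.lt_succ_self _⟩
  have h1 := tendsto_measure_iUnion_atTop (μ := m) hmono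
  rw [hunion, measure_univ] at h1
  have h2 := (ENNReal.tendsto_toReal (by simp : (1:ℝ≥0∞) ≠ ⊤)).comp h1
  exact h2

variable {m}

/-- index of the interval containing `t` at level `n` -/
def Kidx (n : ℕ) (t : ℝ) : ℕ := sInf {k | t < sR m n (k+1)}

lemma Kidx_nonempty {t : ℝ} (ht : t < 1) (n : ℕ) :
    {k | t < sR m n (k+1)}.Nonempty := by
  have h := (tendsto_sR m n).eventually (eventually_gt_nhds ht)
  obtain ⟨k, hk1, hk2⟩ := (h.and (eventually_ge_atTop 1)).exists
  exact ⟨k - 1, by simpa [Nat.sub_add_cancel hk2] using hk1⟩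

lemma Kidx_spec {t : ℝ} (ht : t ∈ Set.Ioo (0:ℝ) 1) (n : ℕ) :
    sR m n (Kidx (m := m) n t) ≤ t ∧ t < sR m n (Kidx (m := m) n t + 1) := by
  have hne := Kidx_nonempty (m := m) ht.2 n
  constructor
  · rcases Nat.eq_zero_or_pos (Kidx (m := m) n t) with h0 | hpos
    · rw [h0, sR_zero]; exact le_of_lt ht.1
    · have hdef : Kidx (m := m) n t = sInf {k | t < sR m n (k+1)} := rfl
      have : Kidx (m := m) n t - 1 ∉ {k | t < sR m n (k+1)} :=
        Nat.notMem_of_lt_sInf (by omega)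
      simp only [Set.mem_setOf_eq, not_lt] at this
      have heq : Kidx (m := m) n t - 1 + 1 = Kidx (m := m) n t := by omega
      rwa [heq] at this
  · exact Nat.sInf_mem hne

lemma Kidx_eq_iff {t : ℝ} (ht : t ∈ Set.Ioo (0:ℝ) 1) (n k : ℕ) :
    Kidx (m := m) n t = k ↔ sR m n k ≤ t ∧ t < sR m n (k+1) := by
  constructor
  · rintro rfl; exact Kidx_spec (m := m) ht n
  · rintro ⟨h1, h2⟩
    have hub : Kidx (m := m) n t ≤ k := Nat.sInf_le (show k ∈ {j | t < sR m n (j+1)} from h2)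
    rcases lt_or_eq_of_le hub with hlt | heq
    · exfalso
      have := (Kidx_spec (m := m) ht n).2
      have hmono := sR_mono m n (show Kidx (m := m) n t + 1 ≤ k by omega)
      linarith
    · exact heq

/-- the address of the interval containing `t` at level `n` -/
def aAdr (n : ℕ) (t : ℝ) : Fin d → ℤ := Function.invFun (code n) (Kidx (m := m) n t)

lemma code_aAdr {t : ℝ} (ht : t ∈ Set.Ioo (0:ℝ) 1) (n : ℕ) :
    code n (aAdr (m := m) n t) = Kidx (m := m) n t := by
  obtain ⟨h1, h2⟩ := Kidx_spec (m := m) ht n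
  set K := Kidx (m := m) n t with hK
  have hsub : ¬ cset d n (K + 1) ⊆ cset d n K := by
    intro hsub
    have : sR m n (K+1) ≤ sR m n K :=
      ENNReal.toReal_mono (measure_ne_top m _) (measure_mono hsub)
    linarith
  obtain ⟨x, hx1, hx2⟩ := Set.not_subset.mp hsub
  simp only [cset, Set.mem_setOf_eq, not_lt] at hx1 hx2
  have hcx : code n (addr n x) = K := by omega
  exact Function.invFun_eq ⟨addr n x, hcx⟩

lemma Kidx_succ {t : ℝ} (ht : t ∈ Set.Ioo (0:ℝ) 1) (n : ℕ) :
    Kidx (m := m) n t = Kidx (m := m) (n+1) t / 2 ^ d := by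
  set K' := Kidx (m := m) (n+1) t with hK'
  obtain ⟨h1, h2⟩ := Kidx_spec (m := m) ht (n+1)
  rw [Kidx_eq_iff ht]
  have hpos : 0 < 2 ^ d := pow_pos (by norm_num) d
  constructor
  · calc sR m n (K' / 2 ^ d) = sR m (n+1) (2 ^ d * (K' / 2 ^ d)) := (sR_level m n _).symm
      _ ≤ sR m (n+1) K' :=
          sR_mono m _ (by rw [mul_comm]; exact Nat.div_mul_le_self _ _)
      _ ≤ t := h1
  · have hlt : K' + 1 ≤ 2 ^ d * (K' / 2 ^ d + 1) := by
      have := (Nat.div_lt_iff_lt_mul hpos).mp (Nat.lt_succ_self (K' / 2 ^ d))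
      rw [mul_comm]
      exact this
    calc t < sR m (n+1) (K' + 1) := h2
      _ ≤ sR m (n+1) (2 ^ d * (K' / 2 ^ d + 1)) := sR_mono m _ hlt
      _ = sR m n (K' / 2 ^ d + 1) := sR_level m n _

lemma aAdr_parent {t : ℝ} (ht : t ∈ Set.Ioo (0:ℝ) 1) (n : ℕ) :
    aAdr (m := m) n t = fun i => aAdr (m := m) (n+1) t i / 2 := by
  apply code_inj n
  set c' := aAdr (m := m) (n+1) t with hc'
  have hc : code (n+1) c' = Kidx (m := m) (n+1) t := code_aAdr ht (n+1)
  have hstep : code (n+1) c'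
      = 2 ^ d * code n (fun i => c' i / 2) + (finFunctionFinEquiv (ofs c') : ℕ) := rfl
  have hlt := ofs_lt c'
  have hpos : 0 < 2 ^ d := pow_pos (by norm_num) d
  have hkey : code n (fun i => c' i / 2) = Kidx (m := m) (n+1) t / 2 ^ d := by
    rw [← hc, hstep, Nat.mul_add_div hpos, Nat.div_eq_of_lt hlt, Nat.add_zero]
  rw [code_aAdr ht n, hkey]
  exact Kidx_succ ht n

variable (m) in
/-- level-`n` approximation of the representing function -/
def xiN (n : ℕ) (t : ℝ) : EuclideanSpace ℝ (Fin d) :=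
  if t ∈ Set.Ioo (0:ℝ) 1 then corner n (aAdr (m := m) n t) else 0

variable (m) in
/-- the representing function of `m` -/
def xi (t : ℝ) : EuclideanSpace ℝ (Fin d) := limUnder atTop fun n => xiN m n t

/-- level-`n` cube-corner rounding map -/
def gN (d : ℕ) (n : ℕ) (x : EuclideanSpace ℝ (Fin d)) : EuclideanSpace ℝ (Fin d) :=
  corner n (addr n x)

lemma measurable_gN (n : ℕ) : Measurable (gN d n) :=
  (measurable_of_countable _).comp (measurable_addr n)

lemma dist_xiN_succ {t : ℝ} (ht : t ∈ Set.Ioo (0:ℝ) 1) (n : ℕ) :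
    dist (xiN m n t) (xiN m (n+1) t) ≤ (Real.sqrt d / 2) * (1/2) ^ n := by
  simp only [xiN, if_pos ht]
  rw [dist_eq_norm]
  have hbd : ‖corner n (aAdr (m := m) n t) - corner (n+1) (aAdr (m := m) (n+1) t)‖
      ≤ Real.sqrt d * (1/2) ^ (n+1) := by
    apply norm_le_of_forall_abs_le (by positivity)
    intro i
    have hpar := congrFun (aAdr_parent (m := m) ht n) i
    have happ : (corner n (aAdr (m := m) n t) - corner (n+1) (aAdr (m := m) (n+1) t)) i
        = (aAdr (m := m) n t i : ℝ) / 2 ^ n - (aAdr (m := m) (n+1) t i : ℝ) / 2 ^ (n+1) := rfl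
    rw [happ, hpar]
    set b : ℤ := aAdr (m := m) (n+1) t i with hb
    have hmod : 0 ≤ b % 2 ∧ b % 2 ≤ 1 ∧ b = 2 * (b / 2) + b % 2 := by omega
    have hcast : (b : ℝ) = 2 * ((b / 2 : ℤ) : ℝ) + ((b % 2 : ℤ) : ℝ) := by
      exact_mod_cast congrArg (fun z : ℤ => (z : ℝ)) hmod.2.2
    have h2n : (0:ℝ) < 2 ^ (n+1) := by positivity
    have heq : ((b / 2 : ℤ) : ℝ) / 2 ^ n - (b : ℝ) / 2 ^ (n+1)
        = -(((b % 2 : ℤ) : ℝ) / 2 ^ (n+1)) := by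
      rw [hcast]; field_simp; ring
    rw [heq, abs_neg, abs_div, abs_of_nonneg (by positivity : (0:ℝ) ≤ (2:ℝ) ^ (n+1))]
    have h0 : (0:ℝ) ≤ ((b % 2 : ℤ) : ℝ) := by exact_mod_cast hmod.1
    have h1 : ((b % 2 : ℤ) : ℝ) ≤ 1 := by exact_mod_cast hmod.2.1
    rw [abs_of_nonneg h0]
    calc ((b % 2 : ℤ) : ℝ) / 2 ^ (n+1) ≤ 1 / 2 ^ (n+1) := by gcongr
      _ = (1/2) ^ (n+1) := by rw [div_pow, one_pow]
  calc ‖_ - _‖ ≤ Real.sqrt d * (1/2) ^ (n+1) := hbd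
    _ = Real.sqrt d / 2 * (1/2) ^ n := by rw [pow_succ]; ring

lemma tendsto_xiN (t : ℝ) : Tendsto (fun n => xiN m n t) atTop (𝓝 (xi m t)) := by
  by_cases ht : t ∈ Set.Ioo (0:ℝ) 1
  · have hc : CauchySeq fun n => xiN m n t :=
      cauchySeq_of_le_geometric (1/2) (Real.sqrt d / 2) (by norm_num)
        fun n => dist_xiN_succ (m := m) ht n
    obtain ⟨l, hl⟩ := cauchySeq_tendsto_of_complete hc
    exact tendsto_nhds_limUnder ⟨l, hl⟩
  · have hconst : (fun n => xiN m n t) = fun _ => (0 : EuclideanSpace ℝ (Fin d)) :=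
      funext fun n => if_neg ht
    rw [xi, hconst]
    exact tendsto_nhds_limUnder ⟨0, tendsto_const_nhds⟩

lemma dist_gN (n : ℕ) (x : EuclideanSpace ℝ (Fin d)) :
    dist (gN d n x) x ≤ Real.sqrt d * (1/2) ^ n := by
  rw [dist_eq_norm]
  apply norm_le_of_forall_abs_le (by positivity)
  intro i
  have happ : (gN d n x - x) i = (⌊(2:ℝ) ^ n * x i⌋ : ℝ) / 2 ^ n - x i := rfl
  rw [happ]
  set y : ℝ := (2:ℝ) ^ n * x i with hy
  have h2n : (0:ℝ) < 2 ^ n := by positivity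
  have hfl := Int.floor_le y
  have hfl2 := Int.lt_floor_add_one y
  have hxi : x i = y / 2 ^ n := by rw [hy]; field_simp
  rw [hxi, ← _root_.sub_div, abs_div, abs_of_nonneg h2n.le]
  have hbd : |(⌊y⌋ : ℝ) - y| ≤ 1 := by
    rw [abs_le]; constructor <;> linarith
  calc |(⌊y⌋ : ℝ) - y| / 2 ^ n ≤ 1 / 2 ^ n := by gcongr
    _ = (1/2) ^ n := by rw [div_pow, one_pow]

lemma tendsto_gN (x : EuclideanSpace ℝ (Fin d)) :
    Tendsto (fun n => gN d n x) atTop (𝓝 x) := by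
  rw [tendsto_iff_dist_tendsto_zero]
  apply squeeze_zero (fun n => dist_nonneg) (fun n => dist_gN n x)
  have h := tendsto_pow_atTop_nhds_zero_of_lt_one (by norm_num : (0:ℝ) ≤ 1/2) (by norm_num)
  simpa using h.const_mul (Real.sqrt d)

section Joint

variable {α : Type*} [MeasurableSpace α] (P : α → Measure (EuclideanSpace ℝ (Fin d)))

lemma measurable_Kidx (hP : ∀ n k, Measurable fun a => sR (P a) n k) (n : ℕ) :
    Measurable fun p : α × ℝ => Kidx (m := P p.1) n p.2 := by
  apply measurable_to_countable'
  intro k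
  have hA : ∀ j, MeasurableSet {p : α × ℝ | p.2 < sR (P p.1) n (j+1)} := fun j =>
    measurableSet_lt measurable_snd ((hP n (j+1)).comp measurable_fst)
  have hset : (fun p : α × ℝ => Kidx (m := P p.1) n p.2) ⁻¹' {k}
      = ({p : α × ℝ | p.2 < sR (P p.1) n (k+1)}
          ∩ ⋂ j ∈ Finset.range k, {p : α × ℝ | p.2 < sR (P p.1) n (j+1)}ᶜ)
        ∪ ({p : α × ℝ | ∀ j, ¬ p.2 < sR (P p.1) n (j+1)} ∩ {_p : α × ℝ | k = 0}) := by
    ext p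
    simp only [Set.mem_preimage, Set.mem_singleton_iff, Set.mem_union, Set.mem_inter_iff,
      Set.mem_iInter, Set.mem_compl_iff, Set.mem_setOf_eq, Finset.mem_range]
    constructor
    · rintro rfl
      by_cases hne : {j | p.2 < sR (P p.1) n (j+1)}.Nonempty
      · exact Or.inl ⟨Nat.sInf_mem hne, fun j hj => Nat.notMem_of_lt_sInf hj⟩
      · right
        rw [Set.not_nonempty_iff_eq_empty] at hne
        have hall : ∀ j, ¬ p.2 < sR (P p.1) n (j+1) := fun j =>
          Set.eq_empty_iff_forall_notMem.mp hne j
        have h0 : Kidx (m := P p.1) n p.2 = 0 := by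
          rw [Kidx, hne, Nat.sInf_empty]
        exact ⟨hall, h0⟩
    · rintro (⟨h1, h2⟩ | ⟨hall, hk0⟩)
      · refine le_antisymm (Nat.sInf_le h1) ?_
        by_contra hlt
        push_neg at hlt
        have hmem := Nat.sInf_mem (s := {j | p.2 < sR (P p.1) n (j+1)}) ⟨k, h1⟩
        exact h2 _ hlt hmem
      · have hne : {j | p.2 < sR (P p.1) n (j+1)} = ∅ :=
          Set.eq_empty_iff_forall_notMem.mpr hall
        rw [Kidx, hne, Nat.sInf_empty, hk0]
  rw [hset]
  refine MeasurableSet.union (MeasurableSet.inter (hA k) ?_) (MeasurableSet.inter ?_ ?_)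
  · exact MeasurableSet.biInter (Set.to_countable _) fun j _ => (hA j).compl
  · have : {p : α × ℝ | ∀ j, ¬ p.2 < sR (P p.1) n (j+1)}
        = ⋂ j, {p : α × ℝ | p.2 < sR (P p.1) n (j+1)}ᶜ := by
      ext p; simp
    rw [this]
    exact MeasurableSet.iInter fun j => (hA j).compl
  · exact MeasurableSet.const _

lemma measurable_xiN_joint (hP : ∀ n k, Measurable fun a => sR (P a) n k) (n : ℕ) :
    Measurable fun p : α × ℝ => xiN (P p.1) n p.2 := by
  have heq : (fun p : α × ℝ => xiN (P p.1) n p.2)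
      = fun p => if p.2 ∈ Set.Ioo (0:ℝ) 1
          then (fun k : ℕ => corner n (Function.invFun (code (d := d) n) k))
            (Kidx (m := P p.1) n p.2) else 0 := rfl
  rw [heq]
  refine Measurable.ite (measurable_snd measurableSet_Ioo) ?_ measurable_const
  have h := (measurable_from_nat (mα := inferInstance)
      (f := fun k : ℕ => corner n (Function.invFun (code (d := d) n) k))).comp
    (measurable_Kidx P hP n)
  exact h

lemma measurable_xi_joint (hP : ∀ n k, Measurable fun a => sR (P a) n k)
    (hprob : ∀ a, IsProbabilityMeasure (P a)) :
    Measurable fun p : α × ℝ => xi (P p.1) p.2 := by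
  apply measurable_of_tendsto_metrizable' atTop (fun n => measurable_xiN_joint P hP n)
  rw [tendsto_pi_nhds]
  intro p
  haveI := hprob p.1
  exact tendsto_xiN (m := P p.1) p.2

end Joint

lemma measurable_xiN (n : ℕ) : Measurable (xiN m n) := by
  haveI : ∀ u : Unit, IsProbabilityMeasure ((fun _ : Unit => m) u) := fun _ => inferInstance
  have h := measurable_xiN_joint (fun _ : Unit => m) (fun n k => measurable_const) n
  have hmk : Measurable fun t : ℝ => (((), t) : Unit × ℝ) :=
    Measurable.prodMk measurable_const measurable_id
  exact h.comp hmk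

lemma measurable_xi : Measurable (xi m) := by
  have h := measurable_xi_joint (fun _ : Unit => m) (fun n k => measurable_const)
    (fun _ => inferInstance)
  have hmk : Measurable fun t : ℝ => (((), t) : Unit × ℝ) :=
    Measurable.prodMk measurable_const measurable_id
  have h2 := h.comp hmk
  exact h2

lemma measurable_Kidx_t (n : ℕ) : Measurable fun t => Kidx (m := m) n t := by
  have h := measurable_Kidx (fun _ : Unit => m) (fun _ _ => measurable_const) n
  have hmk : Measurable fun t : ℝ => (((), t) : Unit × ℝ) :=
    Measurable.prodMk measurable_const measurable_id
  exact h.comp hmk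

lemma volume_Tk (n k : ℕ) :
    volume {t : ℝ | t ∈ Set.Ioo (0:ℝ) 1 ∧ Kidx (m := m) n t = k}
      = m {x | code n (addr n x) = k} := by
  have hset : {t : ℝ | t ∈ Set.Ioo (0:ℝ) 1 ∧ Kidx (m := m) n t = k}
      = Set.Ioo (0:ℝ) 1 ∩ Set.Ico (sR m n k) (sR m n (k+1)) := by
    ext t
    simp only [Set.mem_setOf_eq, Set.mem_inter_iff, Set.mem_Ico]
    exact ⟨fun ⟨ht, hk⟩ => ⟨ht, (Kidx_eq_iff ht n k).mp hk⟩,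
      fun ⟨ht, hk⟩ => ⟨ht, (Kidx_eq_iff ht n k).mpr hk⟩⟩
  have h0 : 0 ≤ sR m n k := sR_nonneg m n k
  have h1 : sR m n (k+1) ≤ 1 := sR_le_one m n (k+1)
  have hle : volume (Set.Ioo (0:ℝ) 1 ∩ Set.Ico (sR m n k) (sR m n (k+1)))
      ≤ ENNReal.ofReal (sR m n (k+1) - sR m n k) := by
    calc volume (Set.Ioo (0:ℝ) 1 ∩ Set.Ico (sR m n k) (sR m n (k+1)))
        ≤ volume (Set.Ico (sR m n k) (sR m n (k+1))) := measure_mono Set.inter_subset_right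
      _ = ENNReal.ofReal (sR m n (k+1) - sR m n k) := Real.volume_Ico
  have hge : ENNReal.ofReal (sR m n (k+1) - sR m n k)
      ≤ volume (Set.Ioo (0:ℝ) 1 ∩ Set.Ico (sR m n k) (sR m n (k+1))) := by
    rw [← Real.volume_Ioo]
    refine measure_mono fun t ht => ?_
    exact ⟨⟨lt_of_le_of_lt h0 ht.1, lt_of_lt_of_le ht.2 h1⟩, le_of_lt ht.1, ht.2⟩
  have hvol : volume (Set.Ioo (0:ℝ) 1 ∩ Set.Ico (sR m n k) (sR m n (k+1)))
      = ENNReal.ofReal (sR m n (k+1) - sR m n k) := le_antisymm hle hge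
  have hsplit : cset d n (k+1) = cset d n k ∪ {x | code n (addr n x) = k} := by
    ext x; simp only [cset, Set.mem_setOf_eq, Set.mem_union]; omega
  have hdisj : Disjoint (cset d n k) {x | code n (addr n x) = k} := by
    rw [Set.disjoint_left]
    intro x hx1 hx2
    simp only [cset, Set.mem_setOf_eq] at hx1 hx2
    omega
  have hmeasset : MeasurableSet {x : EuclideanSpace ℝ (Fin d) | code n (addr n x) = k} :=
    measurable_codeaddr n (MeasurableSet.singleton k)
  have hm : m (cset d n (k+1)) = m (cset d n k) + m {x | code n (addr n x) = k} := by
    rw [hsplit, measure_union hdisj hmeasset]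
  have hle2 : m (cset d n k) ≤ m (cset d n (k+1)) :=
    measure_mono fun x hx => by
      simp only [cset, Set.mem_setOf_eq] at hx ⊢; omega
  rw [hset, hvol, sR, sR, ← ENNReal.toReal_sub_of_le hle2 (measure_ne_top m _),
    ENNReal.ofReal_toReal (by
      exact ne_top_of_le_ne_top (measure_ne_top m _) (tsub_le_self)), hm,
    ENNReal.add_sub_cancel_left (measure_ne_top m _)]

lemma map_xiN (n : ℕ) :
    Measure.map (xiN m n) (volume.restrict (Set.Ioo (0:ℝ) 1)) = Measure.map (gN d n) m := by
  classical
  ext A hA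
  rw [Measure.map_apply (measurable_xiN (m := m) n) hA, Measure.map_apply (measurable_gN n) hA,
    Measure.restrict_apply (measurable_xiN (m := m) n hA)]
  have hTmeas : ∀ k : ℕ, MeasurableSet {t : ℝ | t ∈ Set.Ioo (0:ℝ) 1 ∧ Kidx (m := m) n t = k} :=
    fun k => measurableSet_Ioo.inter (measurable_Kidx_t (m := m) n (MeasurableSet.singleton k))
  have hL : xiN m n ⁻¹' A ∩ Set.Ioo (0:ℝ) 1
      = ⋃ k : ℕ, if corner n (Function.invFun (code (d := d) n) k) ∈ A
          then {t : ℝ | t ∈ Set.Ioo (0:ℝ) 1 ∧ Kidx (m := m) n t = k} else ∅ := by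
    ext t
    simp only [Set.mem_inter_iff, Set.mem_preimage, Set.mem_iUnion]
    constructor
    · rintro ⟨hmemA, ht⟩
      refine ⟨Kidx (m := m) n t, ?_⟩
      rw [if_pos]
      · exact ⟨ht, rfl⟩
      · rw [xiN, if_pos ht] at hmemA
        exact hmemA
    · rintro ⟨k, hk⟩
      split_ifs at hk with hc
      · obtain ⟨ht, hkk⟩ := hk
        refine ⟨?_, ht⟩
        have hx : xiN m n t = corner n (Function.invFun (code (d := d) n) k) := by
          rw [xiN, if_pos ht, aAdr, hkk]
        rw [hx]; exact hc
      · exact absurd hk (Set.notMem_empty t)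
  have hR : gN d n ⁻¹' A
      = ⋃ k : ℕ, if corner n (Function.invFun (code (d := d) n) k) ∈ A
          then {x : EuclideanSpace ℝ (Fin d) | code n (addr n x) = k} else ∅ := by
    ext x
    simp only [Set.mem_preimage, Set.mem_iUnion]
    constructor
    · intro hmemA
      refine ⟨code n (addr n x), ?_⟩
      rw [if_pos]
      · exact Set.mem_setOf_eq ▸ rfl
      · rw [Function.leftInverse_invFun (code_inj n) (addr n x)]
        exact hmemA
    · rintro ⟨k, hk⟩
      split_ifs at hk with hc
      · have hkk : code n (addr n x) = k := hk
        rw [← hkk, Function.leftInverse_invFun (code_inj n) (addr n x)] at hc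
        exact hc
      · exact absurd hk (Set.notMem_empty x)
  have hdisjL : Pairwise (Function.onFun Disjoint fun k : ℕ =>
      if corner n (Function.invFun (code (d := d) n) k) ∈ A
        then {t : ℝ | t ∈ Set.Ioo (0:ℝ) 1 ∧ Kidx (m := m) n t = k} else ∅) := by
    intro k k' hne
    dsimp [Function.onFun]
    split_ifs <;> try simp
    rw [Set.disjoint_left]
    rintro t ⟨_, h1⟩ ⟨_, h2⟩
    exact hne (h1 ▸ h2 ▸ rfl)
  have hdisjR : Pairwise (Function.onFun Disjoint fun k : ℕ =>
      if corner n (Function.invFun (code (d := d) n) k) ∈ A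
        then {x : EuclideanSpace ℝ (Fin d) | code n (addr n x) = k} else ∅) := by
    intro k k' hne
    dsimp [Function.onFun]
    split_ifs <;> try simp
    rw [Set.disjoint_left]
    rintro x h1 h2
    simp only [Set.mem_setOf_eq] at h1 h2
    exact hne (h1 ▸ h2 ▸ rfl)
  have hmeasL : ∀ k : ℕ, MeasurableSet (if corner n (Function.invFun (code (d := d) n) k) ∈ A
      then {t : ℝ | t ∈ Set.Ioo (0:ℝ) 1 ∧ Kidx (m := m) n t = k} else ∅) := by
    intro k; split_ifs
    · exact hTmeas k
    · exact MeasurableSet.empty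
  have hmeasR : ∀ k : ℕ, MeasurableSet (if corner n (Function.invFun (code (d := d) n) k) ∈ A
      then {x : EuclideanSpace ℝ (Fin d) | code n (addr n x) = k} else ∅) := by
    intro k; split_ifs
    · exact measurable_codeaddr n (MeasurableSet.singleton k)
    · exact MeasurableSet.empty
  rw [hL, hR, measure_iUnion hdisjL hmeasL, measure_iUnion hdisjR hmeasR]
  refine tsum_congr fun k => ?_
  split_ifs
  · exact volume_Tk (m := m) n k
  · simp

lemma isProbabilityMeasure_nu :
    IsProbabilityMeasure (volume.restrict (Set.Ioo (0:ℝ) 1)) := by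
  constructor
  rw [Measure.restrict_apply MeasurableSet.univ, Set.univ_inter, Real.volume_Ioo]
  norm_num

lemma map_xi_eq : Measure.map (xi m) (volume.restrict (Set.Ioo (0:ℝ) 1)) = m := by
  haveI := isProbabilityMeasure_nu
  haveI : IsProbabilityMeasure (Measure.map (xi m) (volume.restrict (Set.Ioo (0:ℝ) 1))) :=
    Measure.isProbabilityMeasure_map (measurable_xi (m := m)).aemeasurable
  apply ext_of_forall_lintegral_eq_of_IsFiniteMeasure
  intro f
  have hfm : Measurable fun x : EuclideanSpace ℝ (Fin d) => (f x : ℝ≥0∞) :=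
    measurable_coe_nnreal_ennreal.comp f.continuous.measurable
  rw [lintegral_map hfm (measurable_xi (m := m))]
  obtain ⟨C, hC⟩ := f.bounded
  set B : ℝ≥0∞ := (f 0 : ℝ≥0∞) + ENNReal.ofReal C with hB
  have hBne : B ≠ ⊤ := ENNReal.add_ne_top.mpr ⟨ENNReal.coe_ne_top, ENNReal.ofReal_ne_top⟩
  have hfb : ∀ y : EuclideanSpace ℝ (Fin d), (f y : ℝ≥0∞) ≤ B := by
    intro y
    have h1 : ((f y : ℝ≥0) : ℝ) ≤ ((f 0 : ℝ≥0) : ℝ) + C := by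
      have h2 := hC y 0
      rw [NNReal.dist_eq] at h2
      have := abs_sub_abs_le_abs_sub ((f y : ℝ≥0) : ℝ) ((f 0 : ℝ≥0) : ℝ)
      have h3 := le_abs_self (((f y : ℝ≥0) : ℝ) - ((f 0 : ℝ≥0) : ℝ))
      linarith
    calc (f y : ℝ≥0∞) = ENNReal.ofReal ((f y : ℝ≥0) : ℝ) := by
          rw [ENNReal.ofReal_coe_nnreal]
      _ ≤ ENNReal.ofReal (((f 0 : ℝ≥0) : ℝ) + C) := ENNReal.ofReal_le_ofReal h1
      _ ≤ (f 0 : ℝ≥0∞) + ENNReal.ofReal C := by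
          rw [ENNReal.ofReal_add (by positivity) (le_trans dist_nonneg (hC 0 0))]
          rw [ENNReal.ofReal_coe_nnreal]
      _ = B := rfl
  have hboundint : ∫⁻ _t, B ∂(volume.restrict (Set.Ioo (0:ℝ) 1)) ≠ ⊤ := by
    rw [lintegral_const, measure_univ, mul_one]
    exact hBne
  have hmain : Tendsto (fun n => ∫⁻ t, (f (xiN m n t) : ℝ≥0∞) ∂(volume.restrict (Set.Ioo (0:ℝ) 1)))
      atTop (𝓝 (∫⁻ t, (f (xi m t) : ℝ≥0∞) ∂(volume.restrict (Set.Ioo (0:ℝ) 1)))) := by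
    apply tendsto_lintegral_of_dominated_convergence _ (fun n => hfm.comp (measurable_xiN (m := m) n))
      (fun n => Eventually.of_forall fun t => hfb _) hboundint
    filter_upwards with t
    exact (ENNReal.tendsto_coe.mpr ((f.continuous.tendsto _).comp (tendsto_xiN (m := m) t)))
  have hmain2 : Tendsto (fun n => ∫⁻ x, (f (gN d n x) : ℝ≥0∞) ∂m) atTop
      (𝓝 (∫⁻ x, (f x : ℝ≥0∞) ∂m)) := by
    apply tendsto_lintegral_of_dominated_convergence _ (fun n => hfm.comp (measurable_gN n))
      (fun n => Eventually.of_forall fun x => hfb _)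
      (by rw [lintegral_const, measure_univ, mul_one]; exact ENNReal.coe_ne_top)
    filter_upwards with x
    exact (ENNReal.tendsto_coe.mpr ((f.continuous.tendsto _).comp (tendsto_gN x)))
  have heq : (fun n => ∫⁻ t, (f (xiN m n t) : ℝ≥0∞) ∂(volume.restrict (Set.Ioo (0:ℝ) 1)))
      = fun n => ∫⁻ x, (f (gN d n x) : ℝ≥0∞) ∂m := by
    funext n
    rw [← lintegral_map hfm (measurable_xiN (m := m) n), map_xiN (m := m) n,
      lintegral_map hfm (measurable_gN n)]
  rw [heq] at hmain
  exact tendsto_nhds_unique hmain hmain2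

lemma memLp_xi (hm2 : ∫⁻ x, (‖x‖₊ : ℝ≥0∞) ^ (2:ℝ) ∂m ≠ ⊤) :
    MemLp (xi m) 2 (volume.restrict (Set.Ioo (0:ℝ) 1)) := by
  haveI := isProbabilityMeasure_nu
  set c : ℝ≥0∞ := ENNReal.ofReal (Real.sqrt d) with hc
  have hφ : Measurable fun y : EuclideanSpace ℝ (Fin d) => (‖y‖₊ : ℝ≥0∞) ^ (2:ℝ) :=
    (measurable_coe_nnreal_ennreal.comp measurable_nnnorm).pow_const _
  have hbound : ∀ n, ∫⁻ t, (‖xiN m n t‖₊ : ℝ≥0∞) ^ (2:ℝ) ∂(volume.restrict (Set.Ioo (0:ℝ) 1))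
      ≤ 4 * ((∫⁻ x, (‖x‖₊ : ℝ≥0∞) ^ (2:ℝ) ∂m) + c ^ (2:ℝ)) := by
    intro n
    have hmap : ∫⁻ t, (‖xiN m n t‖₊ : ℝ≥0∞) ^ (2:ℝ) ∂(volume.restrict (Set.Ioo (0:ℝ) 1))
        = ∫⁻ x, (‖gN d n x‖₊ : ℝ≥0∞) ^ (2:ℝ) ∂m := by
      rw [← lintegral_map hφ (measurable_xiN (m := m) n), map_xiN (m := m) n,
        lintegral_map hφ (measurable_gN n)]
    rw [hmap]
    have h4 : (2:ℝ≥0∞) ^ (2:ℝ) = 4 := by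
      rw [show (2:ℝ) = ((2:ℕ):ℝ) by norm_num, ENNReal.rpow_natCast]
      norm_num
    have hpt : ∀ x : EuclideanSpace ℝ (Fin d),
        (‖gN d n x‖₊ : ℝ≥0∞) ^ (2:ℝ) ≤ 4 * ((‖x‖₊ : ℝ≥0∞) ^ (2:ℝ) + c ^ (2:ℝ)) := by
      intro x
      have h1 : ‖gN d n x‖ ≤ ‖x‖ + Real.sqrt d := by
        have hd := dist_gN (d := d) n x
        have h2 : Real.sqrt d * (1/2) ^ n ≤ Real.sqrt d := by
          have hp : (0:ℝ) ≤ (1/2:ℝ) ^ n := by positivity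
          have hp2 : ((1:ℝ)/2) ^ n ≤ 1 := pow_le_one₀ (by norm_num) (by norm_num)
          nlinarith [Real.sqrt_nonneg (d:ℝ)]
        have h3 : ‖gN d n x‖ ≤ ‖x‖ + dist (gN d n x) x := by
          rw [dist_eq_norm]
          calc ‖gN d n x‖ = ‖(gN d n x - x) + x‖ := by rw [sub_add_cancel]
            _ ≤ ‖gN d n x - x‖ + ‖x‖ := norm_add_le _ _
            _ = ‖x‖ + ‖gN d n x - x‖ := by ring
        linarith
      have h1' : (‖gN d n x‖₊ : ℝ≥0∞) ≤ (‖x‖₊ : ℝ≥0∞) + c := by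
        have : ENNReal.ofReal ‖gN d n x‖ ≤ ENNReal.ofReal (‖x‖ + Real.sqrt d) :=
          ENNReal.ofReal_le_ofReal h1
        rwa [ENNReal.ofReal_add (norm_nonneg _) (Real.sqrt_nonneg _),
          ofReal_norm, ofReal_norm] at this
      have hmax : (‖x‖₊ : ℝ≥0∞) + c ≤ 2 * max (‖x‖₊ : ℝ≥0∞) c := by
        rw [two_mul]
        exact add_le_add (le_max_left _ _) (le_max_right _ _)
      calc (‖gN d n x‖₊ : ℝ≥0∞) ^ (2:ℝ)
          ≤ (2 * max (‖x‖₊ : ℝ≥0∞) c) ^ (2:ℝ) :=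
            ENNReal.rpow_le_rpow (le_trans h1' hmax) (by norm_num)
        _ = 4 * (max (‖x‖₊ : ℝ≥0∞) c) ^ (2:ℝ) := by
            rw [ENNReal.mul_rpow_of_nonneg _ _ (by norm_num : (0:ℝ) ≤ 2), h4]
        _ ≤ 4 * ((‖x‖₊ : ℝ≥0∞) ^ (2:ℝ) + c ^ (2:ℝ)) := by
            gcongr
            rcases max_choice ((‖x‖₊ : ℝ≥0∞)) c with h | h <;> rw [h]
            · exact le_self_add
            · exact le_add_self
    calc ∫⁻ x, (‖gN d n x‖₊ : ℝ≥0∞) ^ (2:ℝ) ∂m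
        ≤ ∫⁻ x, 4 * ((‖x‖₊ : ℝ≥0∞) ^ (2:ℝ) + c ^ (2:ℝ)) ∂m := lintegral_mono hpt
      _ = 4 * ((∫⁻ x, (‖x‖₊ : ℝ≥0∞) ^ (2:ℝ) ∂m) + c ^ (2:ℝ)) := by
          rw [lintegral_const_mul _ (f := fun x => (‖x‖₊ : ℝ≥0∞) ^ (2:ℝ) + c ^ (2:ℝ)) (hφ.add measurable_const),
            lintegral_add_right _ measurable_const, lintegral_const, measure_univ, mul_one]
  have hliminf : ∫⁻ t, (‖xi m t‖₊ : ℝ≥0∞) ^ (2:ℝ) ∂(volume.restrict (Set.Ioo (0:ℝ) 1))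
      ≤ 4 * ((∫⁻ x, (‖x‖₊ : ℝ≥0∞) ^ (2:ℝ) ∂m) + c ^ (2:ℝ)) := by
    have hcong : ∫⁻ t, (‖xi m t‖₊ : ℝ≥0∞) ^ (2:ℝ) ∂(volume.restrict (Set.Ioo (0:ℝ) 1))
        = ∫⁻ t, liminf (fun n => (‖xiN m n t‖₊ : ℝ≥0∞) ^ (2:ℝ)) atTop
            ∂(volume.restrict (Set.Ioo (0:ℝ) 1)) := by
      apply lintegral_congr_ae
      filter_upwards with t
      have h2 : Tendsto (fun n => (‖xiN m n t‖₊ : ℝ≥0∞) ^ (2:ℝ)) atTop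
          (𝓝 ((‖xi m t‖₊ : ℝ≥0∞) ^ (2:ℝ))) :=
        (ENNReal.continuous_rpow_const.tendsto _).comp
          (ENNReal.tendsto_coe.mpr (tendsto_xiN (m := m) t).nnnorm)
      exact h2.liminf_eq.symm
    rw [hcong]
    calc ∫⁻ t, liminf (fun n => (‖xiN m n t‖₊ : ℝ≥0∞) ^ (2:ℝ)) atTop
          ∂(volume.restrict (Set.Ioo (0:ℝ) 1))
        ≤ liminf (fun n => ∫⁻ t, (‖xiN m n t‖₊ : ℝ≥0∞) ^ (2:ℝ)
            ∂(volume.restrict (Set.Ioo (0:ℝ) 1))) atTop :=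
          lintegral_liminf_le fun n => hφ.comp (measurable_xiN (m := m) n)
      _ ≤ liminf (fun _ : ℕ => 4 * ((∫⁻ x, (‖x‖₊ : ℝ≥0∞) ^ (2:ℝ) ∂m) + c ^ (2:ℝ))) atTop :=
          liminf_le_liminf (Eventually.of_forall hbound)
      _ = 4 * ((∫⁻ x, (‖x‖₊ : ℝ≥0∞) ^ (2:ℝ) ∂m) + c ^ (2:ℝ)) := liminf_const _
  have hfin : 4 * ((∫⁻ x, (‖x‖₊ : ℝ≥0∞) ^ (2:ℝ) ∂m) + c ^ (2:ℝ)) ≠ ⊤ := by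
    apply ENNReal.mul_ne_top (by norm_num)
    exact ENNReal.add_ne_top.mpr
      ⟨hm2, ENNReal.rpow_ne_top_of_nonneg (by norm_num) ENNReal.ofReal_ne_top⟩
  refine ⟨(measurable_xi (m := m)).aestronglyMeasurable, ?_⟩
  rw [eLpNorm_eq_lintegral_rpow_enorm_toReal (by norm_num : (2:ℝ≥0∞) ≠ 0) (by norm_num : (2:ℝ≥0∞) ≠ ⊤)]
  have htoReal : (2:ℝ≥0∞).toReal = 2 := by simp
  rw [htoReal]
  exact ENNReal.rpow_lt_top_of_nonneg (by norm_num)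
    (ne_top_of_le_ne_top hfin hliminf)

end MeasurePart

section Eval

variable {Ω : Type*} [MeasurableSpace Ω] [TopologicalSpace Ω]
  [HasOuterApproxClosed Ω] [BorelSpace Ω]

lemma measurable_eval {A : Set Ω} (hA : MeasurableSet A) :
    Measurable[borel (ProbabilityMeasure Ω), inferInstance]
      (fun Q : ProbabilityMeasure Ω => (Q : Measure Ω) A) := by
  letI : MeasurableSpace (ProbabilityMeasure Ω) := borel (ProbabilityMeasure Ω)
  haveI : BorelSpace (ProbabilityMeasure Ω) := ⟨rfl⟩
  have cont : ∀ g : BoundedContinuousFunction Ω ℝ≥0, Continuous fun Q : ProbabilityMeasure Ω =>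
      ∫⁻ x, (g x : ℝ≥0∞) ∂(Q : Measure Ω) := by
    intro g
    rw [continuous_iff_continuousAt]
    intro Q
    exact (ProbabilityMeasure.tendsto_iff_forall_lintegral_tendsto.mp tendsto_id) g
  have key : ∀ ⦃A : Set Ω⦄, MeasurableSet A →
      Measurable (fun Q : ProbabilityMeasure Ω => (Q : Measure Ω) A) := by
    refine MeasurableSpace.induction_on_inter
      (C := fun A _ => Measurable fun Q : ProbabilityMeasure Ω => (Q : Measure Ω) A)
      (s := {s : Set Ω | IsClosed s})
      (by rw [BorelSpace.measurable_eq (α := Ω)]; exact borel_eq_generateFrom_isClosed)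
      isPiSystem_isClosed ?_ ?_ ?_ ?_
    · simp only [measure_empty]
      exact measurable_const
    · intro F hF
      have hF' : IsClosed F := hF
      have hlim : ∀ Q : ProbabilityMeasure Ω,
          Tendsto (fun n => ∫⁻ x, (hF'.apprSeq n x : ℝ≥0∞) ∂(Q : Measure Ω)) atTop
            (𝓝 ((Q : Measure Ω) F)) := fun Q =>
        HasOuterApproxClosed.tendsto_lintegral_apprSeq hF' (Q : Measure Ω)
      exact measurable_of_tendsto_metrizable' atTop
        (fun n => (cont (hF'.apprSeq n)).measurable) (tendsto_pi_nhds.mpr hlim)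
    · intro t ht hrec
      have : (fun Q : ProbabilityMeasure Ω => (Q : Measure Ω) tᶜ)
          = fun Q : ProbabilityMeasure Ω => 1 - (Q : Measure Ω) t := by
        funext Q
        rw [measure_compl ht (measure_ne_top _ _), measure_univ]
      rw [this]
      exact measurable_const.sub hrec
    · intro f hdisj hmeas hrec
      have : (fun Q : ProbabilityMeasure Ω => (Q : Measure Ω) (⋃ i, f i))
          = fun Q : ProbabilityMeasure Ω => ∑' i, (Q : Measure Ω) (f i) := by
        funext Q
        exact measure_iUnion hdisj hmeas
      rw [this]
      exact Measurable.ennreal_tsum hrec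
  exact key hA

end Eval

section ToLp

lemma measurable_into_emetric {β X : Type*} [MeasurableSpace β] [EMetricSpace X]
    [TopologicalSpace.SeparableSpace X] (F : β → X)
    (h : ∀ y : X, Measurable fun b => edist (F b) y) :
    Measurable[inferInstance, borel X] F := by
  apply measurable_generateFrom
  intro U hU
  have hUopen : IsOpen U := hU
  rcases Set.eq_empty_or_nonempty (Uᶜ : Set X) with hUc | hUc
  · have huniv : U = Set.univ := by
      rw [← Set.compl_empty_iff]; exact hUc
    rw [huniv]
    simp
  obtain ⟨T, hTsub, hTcount, hTdense⟩ :=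
    (TopologicalSpace.IsSeparable.of_separableSpace (Uᶜ : Set X)).exists_countable_dense_subset
  haveI : Countable T := hTcount.to_subtype
  have h1 : ∀ b, EMetric.infEdist (F b) (Uᶜ) = ⨅ y : T, edist (F b) (y : X) := by
    intro b
    apply le_antisymm
    · exact le_iInf fun y => EMetric.infEdist_le_edist_of_mem (hTsub y.2)
    · calc (⨅ y : T, edist (F b) (y : X)) = EMetric.infEdist (F b) T := by
            rw [iInf_subtype]; rfl
        _ = EMetric.infEdist (F b) (closure T) := (EMetric.infEdist_closure).symm
        _ ≤ EMetric.infEdist (F b) (Uᶜ) := EMetric.infEdist_anti hTdense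
  have hpre : F ⁻¹' U = {b | (⨅ y : T, edist (F b) (y : X)) ≠ 0} := by
    ext b
    rw [Set.mem_preimage, Set.mem_setOf_eq, ← h1]
    constructor
    · intro hbU
      have hnotmem : F b ∉ closure (Uᶜ) := by
        rw [(hUopen.isClosed_compl).closure_eq]
        simpa using hbU
      exact (EMetric.infEdist_pos_iff_notMem_closure.mpr hnotmem).ne'
    · intro hne
      by_contra hbU
      have hmem : F b ∈ closure (Uᶜ) := subset_closure (by simpa using hbU)
      have : ¬ (0 < EMetric.infEdist (F b) (Uᶜ)) := fun hpos =>
        (EMetric.infEdist_pos_iff_notMem_closure.mp hpos) hmem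
      exact hne (by simpa [pos_iff_ne_zero] using this)
  rw [hpre]
  have hmeas : Measurable fun b => ⨅ y : T, edist (F b) (y : X) :=
    Measurable.iInf fun y => h (y : X)
  exact hmeas (measurableSet_singleton 0).compl

variable {d : ℕ}

lemma measurable_toLp {β : Type*} [MeasurableSpace β]
    (f : β → ℝ → EuclideanSpace ℝ (Fin d))
    (hf : Measurable fun p : β × ℝ => f p.1 p.2)
    (hmem : ∀ b, MemLp (f b) 2 (volume.restrict (Set.Ioo (0:ℝ) 1))) :
    Measurable[inferInstance,
        borel (Lp (EuclideanSpace ℝ (Fin d)) 2 (volume.restrict (Set.Ioo (0:ℝ) 1)))]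
      fun b => (hmem b).toLp (f b) := by
  haveI : Fact ((1:ℝ≥0∞) ≤ 2) := ⟨by norm_num⟩
  haveI : Fact ((2:ℝ≥0∞) ≠ ⊤) := ⟨by norm_num⟩
  apply measurable_into_emetric
  intro y
  have hymeas : Measurable (⇑y : ℝ → EuclideanSpace ℝ (Fin d)) :=
    (Lp.stronglyMeasurable y).measurable
  have hy : Measurable fun p : β × ℝ => f p.1 p.2 - y p.2 :=
    hf.sub (hymeas.comp measurable_snd)
  have hedist : ∀ b, edist ((hmem b).toLp (f b)) y
      = (∫⁻ t, (‖f b t - y t‖₊ : ℝ≥0∞) ^ (2:ℝ)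
          ∂(volume.restrict (Set.Ioo (0:ℝ) 1))) ^ (1/(2:ℝ)) := by
    intro b
    rw [Lp.edist_def]
    have hcong : eLpNorm (⇑((hmem b).toLp (f b)) - ⇑y) 2 (volume.restrict (Set.Ioo (0:ℝ) 1))
        = eLpNorm (fun t => f b t - y t) 2 (volume.restrict (Set.Ioo (0:ℝ) 1)) := by
      apply eLpNorm_congr_ae
      filter_upwards [MemLp.coeFn_toLp (hmem b)] with t ht
      simp [ht]
    rw [hcong, eLpNorm_eq_lintegral_rpow_enorm_toReal (by norm_num) (by norm_num)]
    norm_num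
    rfl
  have hinner : Measurable fun p : β × ℝ => (‖f p.1 p.2 - y p.2‖₊ : ℝ≥0∞) ^ (2:ℝ) :=
    (ENNReal.continuous_rpow_const.measurable).comp
      (measurable_coe_nnreal_ennreal.comp hy.nnnorm)
  have hjoint : Measurable fun b => ∫⁻ t, (‖f b t - y t‖₊ : ℝ≥0∞) ^ (2:ℝ)
      ∂(volume.restrict (Set.Ioo (0:ℝ) 1)) := by
    apply Measurable.lintegral_prod_right
      (f := fun b t => (‖f b t - y t‖₊ : ℝ≥0∞) ^ (2:ℝ))
    exact hinner
  have heq : (fun b => edist ((hmem b).toLp (f b)) y)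
      = fun b => (∫⁻ t, (‖f b t - y t‖₊ : ℝ≥0∞) ^ (2:ℝ)
          ∂(volume.restrict (Set.Ioo (0:ℝ) 1))) ^ (1/(2:ℝ)) := funext hedist
  rw [heq]
  exact (ENNReal.continuous_rpow_const.measurable).comp hjoint

end ToLp

end MeasL2Aux

/-- **Measurable selection of L² representatives.** Given a weakly-measurably indexed family
of probability measures on `ℝ^d` with uniformly bounded `(2+ε)`-moments, one can represent
each `μ^u` as the law of a Borel function `ξ^u : (0,1) → ℝ^d` under Lebesgue measure, in such a
way that `u ↦ ξ^u ∈ L²((0,1);ℝ^d)` is measurable. -/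
theorem measurable_L2_representation
    (d : ℕ) (ε : ℝ) (hε : 0 < ε)
    (μ : ℝ → ProbabilityMeasure (EuclideanSpace ℝ (Fin d)))
    (hμmeas : Measurable[inferInstance,
        borel (ProbabilityMeasure (EuclideanSpace ℝ (Fin d)))]
      (fun u : Set.Icc (0:ℝ) 1 => μ ↑u))
    (hmom : (⨆ u ∈ Set.Icc (0:ℝ) 1,
        ∫⁻ x, (‖x‖₊ : ℝ≥0∞) ^ ((2:ℝ) + ε)
          ∂(μ u : Measure (EuclideanSpace ℝ (Fin d)))) < ⊤) :
    ∃ (ξ : ℝ → ℝ → EuclideanSpace ℝ (Fin d))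
      (_ : ∀ u, Measurable (ξ u))
      (hmem : ∀ u, MemLp (ξ u) 2 (volume.restrict (Set.Ioo (0:ℝ) 1))),
      (∀ u ∈ Set.Icc (0:ℝ) 1,
        Measure.map (ξ u) (volume.restrict (Set.Ioo (0:ℝ) 1)) =
          (μ u : Measure (EuclideanSpace ℝ (Fin d)))) ∧
      Measurable[inferInstance,
          borel (Lp (EuclideanSpace ℝ (Fin d)) 2 (volume.restrict (Set.Ioo (0:ℝ) 1)))]
        (fun u : Set.Icc (0:ℝ) 1 => (hmem ↑u).toLp (ξ ↑u)) := by
  classical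
  set P : ℝ → Measure (EuclideanSpace ℝ (Fin d)) := fun u =>
    if u ∈ Set.Icc (0:ℝ) 1 then (μ u : Measure (EuclideanSpace ℝ (Fin d)))
    else Measure.dirac 0 with hP
  have hPpos : ∀ u ∈ Set.Icc (0:ℝ) 1, P u = (μ u : Measure (EuclideanSpace ℝ (Fin d))) :=
    fun u hu => if_pos hu
  have hPneg : ∀ u, u ∉ Set.Icc (0:ℝ) 1 → P u = Measure.dirac 0 := fun u hu => if_neg hu
  haveI hPprob : ∀ u, IsProbabilityMeasure (P u) := by
    intro u
    by_cases h : u ∈ Set.Icc (0:ℝ) 1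
    · rw [hPpos u h]; exact (μ u).2
    · rw [hPneg u h]; infer_instance
  have hφ : Measurable fun x : EuclideanSpace ℝ (Fin d) => (‖x‖₊ : ℝ≥0∞) ^ (2:ℝ) :=
    (ENNReal.continuous_rpow_const.measurable).comp
      (measurable_coe_nnreal_ennreal.comp measurable_nnnorm)
  have hm2 : ∀ u, ∫⁻ x, (‖x‖₊ : ℝ≥0∞) ^ (2:ℝ) ∂(P u) ≠ ⊤ := by
    intro u
    by_cases h : u ∈ Set.Icc (0:ℝ) 1
    · have hmom_u : ∫⁻ x, (‖x‖₊ : ℝ≥0∞) ^ ((2:ℝ)+ε)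
          ∂(μ u : Measure (EuclideanSpace ℝ (Fin d))) < ⊤ :=
        lt_of_le_of_lt
          (le_biSup (f := fun u => ∫⁻ x, (‖x‖₊ : ℝ≥0∞) ^ ((2:ℝ)+ε)
            ∂(μ u : Measure (EuclideanSpace ℝ (Fin d)))) h) hmom
      have hpt : ∀ x : EuclideanSpace ℝ (Fin d),
          (‖x‖₊ : ℝ≥0∞) ^ (2:ℝ) ≤ 1 + (‖x‖₊ : ℝ≥0∞) ^ ((2:ℝ)+ε) := by
        intro x
        rcases le_total ((‖x‖₊ : ℝ≥0∞)) 1 with hx | hx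
        · calc (‖x‖₊ : ℝ≥0∞) ^ (2:ℝ) ≤ 1 ^ (2:ℝ) := ENNReal.rpow_le_rpow hx (by norm_num)
            _ = 1 := ENNReal.one_rpow _
            _ ≤ _ := le_self_add
        · calc (‖x‖₊ : ℝ≥0∞) ^ (2:ℝ) ≤ (‖x‖₊ : ℝ≥0∞) ^ ((2:ℝ)+ε) :=
              ENNReal.rpow_le_rpow_of_exponent_le hx (by linarith)
            _ ≤ _ := le_add_self
      rw [hPpos u h]
      have hle := lintegral_mono (μ := (μ u : Measure (EuclideanSpace ℝ (Fin d)))) hpt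
      have hsum : ∫⁻ x, (1 + (‖x‖₊ : ℝ≥0∞) ^ ((2:ℝ)+ε))
            ∂(μ u : Measure (EuclideanSpace ℝ (Fin d)))
          = 1 + ∫⁻ x, (‖x‖₊ : ℝ≥0∞) ^ ((2:ℝ)+ε)
            ∂(μ u : Measure (EuclideanSpace ℝ (Fin d))) := by
        rw [lintegral_add_left measurable_const, lintegral_const, measure_univ, mul_one]
      rw [hsum] at hle
      exact ne_top_of_le_ne_top
        (ENNReal.add_ne_top.mpr ⟨ENNReal.one_ne_top, hmom_u.ne⟩) hle
    · rw [hPneg u h, lintegral_dirac' _ hφ]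
      simp
  refine ⟨fun u => MeasL2Aux.xi (P u), fun u => MeasL2Aux.measurable_xi (m := P u),
    fun u => MeasL2Aux.memLp_xi (m := P u) (hm2 u), ?_, ?_⟩
  · intro u hu
    rw [← hPpos u hu]
    exact MeasL2Aux.map_xi_eq (m := P u)
  · have hPmeas : ∀ n k, Measurable fun v : Set.Icc (0:ℝ) 1 => MeasL2Aux.sR (P ↑v) n k := by
      intro n k
      have h2 := (MeasL2Aux.measurable_eval (Ω := EuclideanSpace ℝ (Fin d))
        (MeasL2Aux.measurableSet_cset n k)).comp hμmeas
      have h3 : (fun v : Set.Icc (0:ℝ) 1 => MeasL2Aux.sR (P ↑v) n k)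
          = fun v : Set.Icc (0:ℝ) 1 =>
            ((μ ↑v : Measure (EuclideanSpace ℝ (Fin d))) (MeasL2Aux.cset d n k)).toReal := by
        funext v
        rw [MeasL2Aux.sR, hPpos ↑v v.2]
      rw [h3]
      exact h2.ennreal_toReal
    have hjoint : Measurable fun p : Set.Icc (0:ℝ) 1 × ℝ => MeasL2Aux.xi (P ↑p.1) p.2 :=
      MeasL2Aux.measurable_xi_joint (fun v : Set.Icc (0:ℝ) 1 => P ↑v) hPmeas
        (fun v => hPprob ↑v)
    exact MeasL2Aux.measurable_toLp (fun v : Set.Icc (0:ℝ) 1 => MeasL2Aux.xi (P ↑v))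
      hjoint (fun v => MeasL2Aux.memLp_xi (m := P ↑v) (hm2 ↑v))
end
end

section
/- Let (X, 𝒜) be a measurable space, λ > 0, and let h : X × ℝ^k → ℝ be jointly measurable (with respect to 𝒜 ⊗ Borel(ℝ^k)) such that for each x ∈ X the map α ↦ h(x,α) is continuous and λ-strongly convex, i.e., h(x, tα + (1−t)α') ≤ t h(x,α) + (1−t) h(x,α') − λ t(1−t) |α−α'|² for all α, α' ∈ ℝ^k and t ∈ [0,1]. Then for each x ∈ X the function α ↦ h(x,α) attains its infimum at a unique point α̂(x) ∈ ℝ^k, and the map x ↦ α̂(x) is measurable from (X,𝒜) to ℝ^k with its Borel σ-algebra. -/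
open MeasureTheory

noncomputable section

lemma exists_min_aux (k : ℕ) (lam : ℝ) (hlam : 0 < lam)
    (f : EuclideanSpace ℝ (Fin k) → ℝ) (hcont : Continuous f)
    (hconv : ∀ (α α' : EuclideanSpace ℝ (Fin k)) (t : ℝ), 0 ≤ t → t ≤ 1 →
      f (t • α + (1 - t) • α') ≤ t * f α + (1 - t) * f α' - lam * t * (1 - t) * ‖α - α'‖ ^ 2) :
    ∃ β, ∀ α, f β ≤ f α := by
  obtain ⟨c, hc⟩ : BddBelow (f '' Metric.sphere (0 : EuclideanSpace ℝ (Fin k)) 1) :=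
    ((isCompact_sphere 0 1).image hcont).bddBelow
  set R : ℝ := max 1 (1 + (f 0 - c) / lam) with hR
  have hR1 : (1 : ℝ) ≤ R := le_max_left _ _
  have key : ∀ α : EuclideanSpace ℝ (Fin k), R < ‖α‖ → f 0 ≤ f α := by
    intro α hα
    set n : ℝ := ‖α‖ with hn
    have hn1 : 1 ≤ n := le_of_lt (lt_of_le_of_lt hR1 hα)
    have hn0 : 0 < n := by linarith
    set t : ℝ := n⁻¹ with ht
    have ht0 : 0 < t := inv_pos.2 hn0
    have ht1 : t ≤ 1 := by
      rw [ht]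
      exact inv_le_one_of_one_le₀ hn1
    have htn : t * n = 1 := inv_mul_cancel₀ (ne_of_gt hn0)
    have hu : ‖t • α‖ = 1 := by
      rw [norm_smul, Real.norm_eq_abs, abs_of_pos ht0, ← hn, htn]
    have hcu : c ≤ f (t • α) := hc ⟨t • α, by simpa [Metric.mem_sphere] using hu, rfl⟩
    have hcv := hconv α 0 t (le_of_lt ht0) ht1
    simp only [smul_zero, add_zero, sub_zero] at hcv
    have hlamn : f 0 - c ≤ lam * (n - 1) := by
      have : 1 + (f 0 - c) / lam ≤ R := le_max_right _ _
      have h2 : (f 0 - c) / lam ≤ n - 1 := by linarith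
      calc f 0 - c = (f 0 - c) / lam * lam := by field_simp
        _ ≤ (n - 1) * lam := mul_le_mul_of_nonneg_right h2 hlam.le
        _ = lam * (n - 1) := by ring
    rw [← hn] at hcv
    have h3 := mul_le_mul_of_nonneg_left (hcu.trans hcv) hn0.le
    have e1 : n * (t * f α + (1 - t) * f 0 - lam * t * (1 - t) * n ^ 2) =
        f α + (n - 1) * f 0 - lam * (n ^ 2 - n) := by
      rw [ht]; field_simp
    rw [e1] at h3
    have hlamn' : n * (f 0 - c) ≤ n * (lam * (n - 1)) :=
      mul_le_mul_of_nonneg_left hlamn hn0.le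
    nlinarith [h3, hlamn']
  obtain ⟨β, hβmem, hβmin⟩ :=
    (isCompact_closedBall (0 : EuclideanSpace ℝ (Fin k)) R).exists_isMinOn
      ⟨0, Metric.mem_closedBall_self (by linarith)⟩ hcont.continuousOn
  refine ⟨β, fun α => ?_⟩
  by_cases hα : ‖α‖ ≤ R
  · exact isMinOn_iff.1 hβmin α (by simpa [Metric.mem_closedBall] using hα)
  · exact le_trans (isMinOn_iff.1 hβmin 0 (Metric.mem_closedBall_self (by linarith)))
      (key α (not_le.1 hα))

/-- **Measurable selection of the argmin of a strongly convex family.** If `h : X × ℝ^k → ℝ` is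
jointly measurable and, for each `x`, `h(x,·)` is continuous and `λ`-strongly convex, then
`h(x,·)` has a unique minimizer `α̂(x)` and `x ↦ α̂(x)` is measurable. -/
theorem strongly_convex_argmin_measurable
    (k : ℕ) (X : Type*) [MeasurableSpace X] (lam : ℝ) (hlam : 0 < lam)
    (h : X → EuclideanSpace ℝ (Fin k) → ℝ)
    (hmeas : Measurable (fun q : X × EuclideanSpace ℝ (Fin k) => h q.1 q.2))
    (hcont : ∀ x, Continuous (h x))
    (hconv : ∀ x (α α' : EuclideanSpace ℝ (Fin k)) (t : ℝ), 0 ≤ t → t ≤ 1 →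
      h x (t • α + (1 - t) • α') ≤
        t * h x α + (1 - t) * h x α' - lam * t * (1 - t) * ‖α - α'‖ ^ 2) :
    ∃ αhat : X → EuclideanSpace ℝ (Fin k),
      Measurable αhat ∧
      ∀ x, (∀ α, h x (αhat x) ≤ h x α) ∧
        (∀ β, (∀ α, h x β ≤ h x α) → β = αhat x) := by
  classical
  have hex : ∀ x, ∃ β, ∀ α, h x β ≤ h x α := fun x =>
    exists_min_aux k lam hlam (h x) (hcont x) (hconv x)
  choose αhat hmin using hex
  have uniq : ∀ x β, (∀ α, h x β ≤ h x α) → β = αhat x := by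
    intro x β hβ
    have h1 := hconv x β (αhat x) (1/2) (by norm_num) (by norm_num)
    have h2 : h x (αhat x) ≤ h x ((1/2 : ℝ) • β + (1 - 1/2 : ℝ) • αhat x) := hmin x _
    have h3 : h x β ≤ h x (αhat x) := hβ _
    have h4 : h x (αhat x) ≤ h x β := hmin x β
    have h5 : ‖β - αhat x‖ ^ 2 ≤ 0 := by nlinarith
    have h6 : β - αhat x = 0 := by
      rw [← norm_eq_zero]
      nlinarith [norm_nonneg (β - αhat x)]
    exact sub_eq_zero.1 h6
  refine ⟨αhat, ?_, fun x => ⟨hmin x, uniq x⟩⟩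
  -- Measurability
  obtain ⟨e, he⟩ := TopologicalSpace.exists_dense_seq (EuclideanSpace ℝ (Fin k))
  have hmeas_pt : ∀ c : EuclideanSpace ℝ (Fin k), Measurable fun x => h x c := fun c =>
    hmeas.comp (measurable_id.prodMk measurable_const)
  set m : X → ℝ := fun x => ⨅ i, h x (e i) with hm
  have hbdd : ∀ x, BddBelow (Set.range fun i => h x (e i)) := fun x =>
    ⟨h x (αhat x), by rintro y ⟨i, rfl⟩; exact hmin x _⟩
  have hm_meas : Measurable m := Measurable.iInf fun i => hmeas_pt (e i)
  have hm_eq : ∀ x, m x = h x (αhat x) := by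
    intro x
    refine le_antisymm ?_ (le_ciInf fun i => hmin x _)
    refine le_of_forall_pos_le_add fun ε hε => ?_
    have hopen : IsOpen {α : EuclideanSpace ℝ (Fin k) | h x α < h x (αhat x) + ε} :=
      isOpen_lt (hcont x) continuous_const
    have hne : Set.Nonempty {α : EuclideanSpace ℝ (Fin k) | h x α < h x (αhat x) + ε} :=
      ⟨αhat x, by simpa using hε⟩
    obtain ⟨i, hi⟩ := he.exists_mem_open hopen hne
    exact le_of_lt (lt_of_le_of_lt (ciInf_le (hbdd x) i) hi)
  have hfind : ∀ (n : ℕ) (x : X), ∃ i, h x (e i) < m x + 1 / (n + 1) := by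
    intro n x
    have h1 : m x < m x + 1 / (n + 1) := by
      have : (0:ℝ) < 1 / (n + 1) := by positivity
      linarith
    exact exists_lt_of_ciInf_lt h1
  set g : ℕ → X → EuclideanSpace ℝ (Fin k) := fun n x => e (Nat.find (hfind n x)) with hg
  have hg_meas : ∀ n, Measurable (g n) := by
    intro n
    apply measurable_from_nat.comp
    apply measurable_to_countable'
    intro i
    have hP : ∀ j : ℕ, MeasurableSet {x : X | h x (e j) < m x + 1 / (n + 1)} := fun j =>
      measurableSet_lt (hmeas_pt (e j)) (hm_meas.add_const _)
    have hset : {x : X | Nat.find (hfind n x) = i} =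
        {x : X | h x (e i) < m x + 1 / (n + 1)} ∩
          ⋂ j, ⋂ _ : j < i, {x : X | h x (e j) < m x + 1 / (n + 1)}ᶜ := by
      ext x
      simp [Nat.find_eq_iff]
    show MeasurableSet {x : X | Nat.find (hfind n x) = i}
    rw [hset]
    exact (hP i).inter
      (MeasurableSet.iInter fun j => MeasurableSet.iInter fun _ => (hP j).compl)
  have hconv_g : ∀ x, Filter.Tendsto (fun n => g n x) Filter.atTop (nhds (αhat x)) := by
    intro x
    rw [Metric.tendsto_atTop]
    intro ε hε
    obtain ⟨N, hN⟩ := exists_nat_gt (2 / (lam * ε ^ 2))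
    refine ⟨N, fun n hn => ?_⟩
    have hn1 : (0:ℝ) < n + 1 := by positivity
    have hfound : h x (g n x) < m x + 1 / (n + 1) := Nat.find_spec (hfind n x)
    rw [hm_eq x] at hfound
    have h1 := hconv x (g n x) (αhat x) (1/2) (by norm_num) (by norm_num)
    have h2 : h x (αhat x) ≤ h x ((1/2 : ℝ) • g n x + (1 - 1/2 : ℝ) • αhat x) := hmin x _
    have hd2 : lam * ‖g n x - αhat x‖ ^ 2 * (n + 1) < 2 := by
      have e2 : lam * ‖g n x - αhat x‖ ^ 2 ≤ 2 * (h x (g n x) - h x (αhat x)) := by nlinarith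
      have e3 : lam * ‖g n x - αhat x‖ ^ 2 < 2 * (1 / (↑n + 1)) := by linarith
      calc lam * ‖g n x - αhat x‖ ^ 2 * (n + 1) < 2 * (1 / (↑n + 1)) * (n + 1) :=
            mul_lt_mul_of_pos_right e3 hn1
        _ = 2 := by field_simp
    have hpos : (0:ℝ) < lam * ε ^ 2 := by positivity
    have hNe : 2 < (N:ℝ) * (lam * ε ^ 2) := by
      have := (div_lt_iff₀ hpos).1 hN
      linarith
    have hnN : (N:ℝ) ≤ (n:ℝ) + 1 := by
      have : (N:ℝ) ≤ (n:ℝ) := Nat.cast_le.2 hn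
      linarith
    have hd2' : ‖g n x - αhat x‖ ^ 2 < ε ^ 2 := by
      have e4 : (N:ℝ) * (lam * ε ^ 2) ≤ ((n:ℝ) + 1) * (lam * ε ^ 2) :=
        mul_le_mul_of_nonneg_right hnN hpos.le
      have hP : (0:ℝ) < lam * ((n:ℝ) + 1) := mul_pos hlam hn1
      have e5 : ‖g n x - αhat x‖ ^ 2 * (lam * ((n:ℝ) + 1)) < ε ^ 2 * (lam * ((n:ℝ) + 1)) := by
        nlinarith [hd2, hNe, e4]
      exact lt_of_mul_lt_mul_right e5 hP.le
    rw [dist_eq_norm]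
    exact lt_of_pow_lt_pow_left₀ 2 hε.le hd2'
  exact measurable_of_tendsto_metrizable hg_meas (tendsto_pi_nhds.2 hconv_g)

end
end
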